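/- arXiv:1508.03764 — 4 statements merged into one kernel-verified Lean document; each statement's English description precedes it below -/
import Mathlib

section
/- Let A be a finite-dimensional algebra with a generalized H-action for some unital associative algebra H over a field F of characteristic 0. Then the n-th colength satisfies ℓ_n^H(A) ≤ (dim A)·(n+1)^{(dim A)² + dim A} for all n ∈ ℕ. -/
open Filter Finset Submodule

noncomputable section

namespace PIExp

/-- The multiset of leaves (occurrences of generators) of a non-associative word. -/
def mleaves {α : Type} : FreeMagma α → Multiset α
  | .of a => {a}
  | .mul x y => mleaves x + mleaves y

variable (F : Type) [Field F] (S : Type)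

/-- The absolutely free non-associative algebra on `X = {x_1, x_2, …}`
with symbols from `S` (the generator `(i, s)` plays the role of `x_i^s`). -/
abbrev FreeNA : Type := FreeNonUnitalNonAssocAlgebra F (ℕ × S)

/-- A non-associative word in the generators, viewed inside the free algebra. -/
def embedMonomial : FreeMagma (ℕ × S) →ₙ* FreeNA F S :=
  FreeMagma.lift (FreeNonUnitalNonAssocAlgebra.of F)

/-- `Wn F S n` is the space of multilinear elements of degree `n` in `x_0, …, x_{n-1}`:
the span of all words `x_{σ(0)}^{s_0} ⋯ x_{σ(n-1)}^{s_{n-1}}` (all bracket arrangements). -/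
def Wn (n : ℕ) : Submodule F (FreeNA F S) :=
  Submodule.span F
    {f | ∃ w : FreeMagma (ℕ × S), (mleaves w).map Prod.fst = Multiset.range n ∧
      f = embedMonomial F S w}

/-- The substitution `x_i ↦ x_{g i}` (with the symbols untouched),
as an algebra endomorphism of the free algebra. -/
def relabelHom (g : ℕ → ℕ) : FreeNA F S →ₙₐ[F] FreeNA F S :=
  FreeNonUnitalNonAssocAlgebra.lift F
    (fun p : ℕ × S => FreeNonUnitalNonAssocAlgebra.of F (g p.1, p.2))

/-- `relabelHom` as a linear endomorphism. -/
def relabelL (g : ℕ → ℕ) : FreeNA F S →ₗ[F] FreeNA F S where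
  toFun := relabelHom F S g
  map_add' := map_add _
  map_smul' := map_smul _

variable {A : Type} [NonUnitalNonAssocSemiring A] [Module F A]
  [SMulCommClass F A A] [IsScalarTower F A A]

variable (A) in
/-- The ideal of polynomial `H`-identities of an algebra `A` with a generalized `H`-action:
all elements of the free algebra vanishing under every substitution `x_i^h ↦ h • ψ i`. -/
def IdH (H : Type) [Semiring H] [Module H A] : Submodule F (FreeNA F H) :=
  ⨅ ψ : ℕ → A,
    LinearMap.ker ((FreeNonUnitalNonAssocAlgebra.lift F (fun p : ℕ × H => p.2 • ψ p.1) :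
      FreeNA F H →ₙₐ[F] A) : FreeNA F H →ₗ[F] A)

variable (A) in
/-- The ideal of graded polynomial identities of a `T`-graded algebra
`A = ⊕_t comp t`: elements vanishing under all graded substitutions `x_i^{(t)} ↦ ψ (i,t) ∈ comp t`. -/
def IdGr (T : Type) (comp : T → Submodule F A) : Submodule F (FreeNA F T) :=
  ⨅ ψ : {ψ : ℕ × T → A // ∀ p, ψ p ∈ comp p.2},
    LinearMap.ker ((FreeNonUnitalNonAssocAlgebra.lift F (fun p : ℕ × T => ψ.1 p) :
      FreeNA F T →ₙₐ[F] A) : FreeNA F T →ₗ[F] A)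

variable (A) in
/-- The ideal of ordinary polynomial identities of `A` (the symbols are trivial). -/
def IdOrd : Submodule F (FreeNA F Unit) :=
  ⨅ ψ : ℕ → A,
    LinearMap.ker ((FreeNonUnitalNonAssocAlgebra.lift F (fun p : ℕ × Unit => ψ p.1) :
      FreeNA F Unit →ₙₐ[F] A) : FreeNA F Unit →ₗ[F] A)

/-- The `n`-th codimension attached to an ideal of identities `I`:
`dim (W_n / (W_n ∩ I))`, computed as the image of `W_n` in the quotient by `I`. -/
def codim (I : Submodule F (FreeNA F S)) (n : ℕ) : ℕ :=
  Module.finrank F ((Wn F S n).map I.mkQ)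

/-- The `n`-th codimension as a cardinal (for possibly infinite-dimensional situations). -/
def codimRank (I : Submodule F (FreeNA F S)) (n : ℕ) : Cardinal :=
  Module.rank F ((Wn F S n).map I.mkQ)

end PIExp
namespace PIExp

/-- The parts of a partition `p ⊢ n`, listed in non-increasing order:
`partFn p 0 = λ_1`, `partFn p 1 = λ_2`, … (`0` beyond the number of parts). -/
def partFn {n : ℕ} (p : Nat.Partition n) : ℕ → ℕ :=
  fun i => ((p.parts.sort (· ≤ ·)).reverse).getD i 0

/-- The cell (row, column) of the `k`-th box (0-indexed) in the canonical
row-by-row filling of the Young diagram with row lengths `lam`. -/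
def cellOf (lam : ℕ → ℕ) : ℕ → ℕ × ℕ
  | 0 => (0, 0)
  | k + 1 =>
      let c := cellOf lam k
      if c.2 + 1 < lam c.1 then (c.1, c.2 + 1) else (c.1 + 1, 0)

/-- The canonical Young tableau of shape `p`: the cell of each of the numbers `0, …, n-1`. -/
def canonT {n : ℕ} (p : Nat.Partition n) : Fin n → ℕ × ℕ :=
  fun m => cellOf (partFn p) (m : ℕ)

/-- A permutation of `Fin n` viewed as a map `ℕ → ℕ`. -/
def permNat {n : ℕ} (σ : Equiv.Perm (Fin n)) : ℕ → ℕ :=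
  fun i => if h : i < n then (σ ⟨i, h⟩ : ℕ) else i

/-- The row stabilizer `R_{T}` of a tableau `T` (given by the cell of each number). -/
def rowStab {n : ℕ} (Tb : Fin n → ℕ × ℕ) : Finset (Equiv.Perm (Fin n)) :=
  Finset.univ.filter fun π => ∀ m, (Tb (π m)).1 = (Tb m).1

/-- The column stabilizer `C_{T}` of a tableau `T`. -/
def colStab {n : ℕ} (Tb : Fin n → ℕ × ℕ) : Finset (Equiv.Perm (Fin n)) :=
  Finset.univ.filter fun π => ∀ m, (Tb (π m)).2 = (Tb m).2

variable (F : Type) [Field F] (S : Type)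

/-- The Young symmetrizer `e_T = a_T b_T = Σ_{π ∈ R_T} Σ_{σ ∈ C_T} (sign σ) πσ`, acting on the
free algebra by permutation of the variables. -/
def youngE {n : ℕ} (Tb : Fin n → ℕ × ℕ) : FreeNA F S →ₗ[F] FreeNA F S :=
  ∑ π ∈ rowStab Tb, ∑ σ ∈ colStab Tb,
    ((Equiv.Perm.sign σ : ℤ) : F) • relabelL F S (permNat (π * σ))

/-- The Young symmetrizer `e*_T = b_T a_T = Σ_{σ ∈ C_T} Σ_{π ∈ R_T} (sign σ) σπ`. -/
def youngEStar {n : ℕ} (Tb : Fin n → ℕ × ℕ) : FreeNA F S →ₗ[F] FreeNA F S :=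
  ∑ σ ∈ colStab Tb, ∑ π ∈ rowStab Tb,
    ((Equiv.Perm.sign σ : ℤ) : F) • relabelL F S (permNat (σ * π))

/-- The multiplicity `m(A, H, λ)` of the irreducible `S_n`-character `χ(λ)` in the `n`-th
cocharacter attached to the ideal of identities `I`; it equals
`dim e_{T_λ}·(W_n/(W_n ∩ I))`, computed here via the canonical tableau of shape `λ`. -/
def mult (I : Submodule F (FreeNA F S)) {n : ℕ} (p : Nat.Partition n) : ℕ :=
  Module.finrank F (((Wn F S n).map (youngE F S (canonT p))).map I.mkQ)

/-- The `n`-th colength `ℓ_n = Σ_{λ ⊢ n} m(A, H, λ)` attached to an ideal of identities `I`. -/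
def colength (I : Submodule F (FreeNA F S)) (n : ℕ) : ℕ :=
  ∑ p : Nat.Partition n, mult F S I p

/-- The function `Φ(x_1, …, x_s) = 1 / (x_1^{x_1} ⋯ x_s^{x_s})` (with `0^0 = 1`). -/
def Phi (s : ℕ) (x : Fin s → ℝ) : ℝ :=
  (∏ i, Real.rpow (x i) (x i))⁻¹

/-- `max { Φ(λ_1/n, …, λ_s/n) : λ ⊢ n, m(A,H,λ) ≠ 0 }`. -/
def maxPhi (s : ℕ) (I : Submodule F (FreeNA F S)) (n : ℕ) : ℝ :=
  sSup {r : ℝ | ∃ p : Nat.Partition n, mult F S I p ≠ 0 ∧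
    r = Phi s (fun i => (partFn p (i : ℕ) : ℝ) / (n : ℝ))}

/-- `d(A) = limsup_n max { Φ(λ_1/n, …, λ_s/n) : λ ⊢ n, m(A,H,λ) ≠ 0 }`. -/
def dVal (s : ℕ) (I : Submodule F (FreeNA F S)) : ℝ :=
  Filter.limsup (fun n : ℕ => maxPhi F S s I n) Filter.atTop

end PIExp
namespace PIExp

/-- `A` is an algebra with a generalized `H`-action: for every `h ∈ H` there exist
`h'_i, h''_i, h'''_i, h''''_i ∈ H` with
`h(ab) = Σ_i ((h'_i a)(h''_i b) + (h'''_i b)(h''''_i a))` for all `a, b ∈ A`. -/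
def IsGenAction (H A : Type) [Semiring H] [NonUnitalNonAssocSemiring A] [Module H A] : Prop :=
  ∀ h : H, ∃ (k : ℕ) (h₁ h₂ h₃ h₄ : Fin k → H), ∀ a b : A,
    h • (a * b) = ∑ i : Fin k, ((h₁ i • a) * (h₂ i • b) + (h₃ i • b) * (h₄ i • a))

/-- `A` is `H`-simple: `A² ≠ 0` and `A` has no `H`-invariant two-sided ideals
other than `0` and `A`. -/
def IsHSimple (F H A : Type) [Field F] [Semiring H] [NonUnitalNonAssocSemiring A]
    [Module F A] [Module H A] : Prop :=
  (∃ a b : A, a * b ≠ 0) ∧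
    ∀ I : Submodule F A,
      (∀ a : A, ∀ x ∈ I, a * x ∈ I) → (∀ a : A, ∀ x ∈ I, x * a ∈ I) →
      (∀ h : H, ∀ x ∈ I, h • x ∈ I) → I = ⊥ ∨ I = ⊤

/-- `comp : T → Submodule F A` is a grading of `A` by the set `T`:
`A = ⊕_{t ∈ T} A^{(t)}` and for all `s, t` there is `r` with `A^{(s)} A^{(t)} ⊆ A^{(r)}`. -/
def IsGrading (F T A : Type) [Field F] [NonUnitalNonAssocSemiring A] [Module F A]
    (comp : T → Submodule F A) : Prop :=
  iSupIndep comp ∧ (⨆ t, comp t) = ⊤ ∧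
    ∀ s t : T, ∃ r : T, ∀ a ∈ comp s, ∀ b ∈ comp t, a * b ∈ comp r

/-- A graded algebra is graded-simple: `A² ≠ 0` and the only graded two-sided ideals
are `0` and `A`. -/
def IsGradedSimple (F T A : Type) [Field F] [NonUnitalNonAssocSemiring A] [Module F A]
    (comp : T → Submodule F A) : Prop :=
  (∃ a b : A, a * b ≠ 0) ∧
    ∀ I : Submodule F A,
      (∀ a : A, ∀ x ∈ I, a * x ∈ I) → (∀ a : A, ∀ x ∈ I, x * a ∈ I) →
      (I = ⨆ t, I ⊓ comp t) → I = ⊥ ∨ I = ⊤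

end PIExp

namespace PIExp
set_option linter.unusedSectionVars false

section Eval

variable {F : Type} [Field F] {H : Type} [Semiring H]
variable {A : Type} [NonUnitalNonAssocSemiring A] [Module F A]
  [SMulCommClass F A A] [IsScalarTower F A A] [Module H A] [SMulCommClass F H A]

lemma mleaves_mul {α : Type} (x y : FreeMagma α) : mleaves (x * y) = mleaves x + mleaves y := rfl

lemma mleaves_of {α : Type} (a : α) : mleaves (FreeMagma.of a) = {a} := rfl

variable (F) in
/-- Evaluation at a substitution. -/
def evalA (ψ : ℕ → A) : FreeNA F H →ₙₐ[F] A :=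
  FreeNonUnitalNonAssocAlgebra.lift F (fun p : ℕ × H => p.2 • ψ p.1)

lemma IdH_eq_iInf : IdH F A H = ⨅ ψ : ℕ → A, LinearMap.ker ((evalA F ψ : FreeNA F H →ₙₐ[F] A) : FreeNA F H →ₗ[F] A) :=
  rfl

lemma evalA_of (ψ : ℕ → A) (q : ℕ × H) :
    evalA F ψ (FreeNonUnitalNonAssocAlgebra.of F q) = q.2 • ψ q.1 := by
  simp [evalA]

lemma evalA_relabel (ψ : ℕ → A) (g : ℕ → ℕ) (f : FreeNA F H) :
    evalA F ψ (relabelHom F H g f) = evalA F (ψ ∘ g) f := by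
  have : (evalA F ψ).comp (relabelHom F H g) = (evalA F (ψ ∘ g) : FreeNA F H →ₙₐ[F] A) := by
    apply FreeNonUnitalNonAssocAlgebra.hom_ext
    intro x
    simp [relabelHom, evalA, Function.comp]
  exact DFunLike.congr_fun this f

lemma embedMonomial_of (a : ℕ × H) :
    embedMonomial F H (FreeMagma.of a) = FreeNonUnitalNonAssocAlgebra.of F a := by
  simp [embedMonomial]

lemma embedMonomial_mul (x y : FreeMagma (ℕ × H)) :
    embedMonomial F H (x * y) = embedMonomial F H x * embedMonomial F H y :=
  map_mul _ x y

/-- Evaluation of a monomial depends only on the variables occurring in it. -/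
lemma evalA_embed_congr (w : FreeMagma (ℕ × H)) (ψ ψ' : ℕ → A)
    (h : ∀ i ∈ (mleaves w).map Prod.fst, ψ i = ψ' i) :
    evalA F ψ (embedMonomial F H w) = evalA F ψ' (embedMonomial F H w) := by
  induction w with
  | ih1 a =>
      rw [embedMonomial_of, evalA_of, evalA_of, h a.1 (by simp [mleaves])]
  | ih2 x y ihx ihy =>
      rw [embedMonomial_mul, map_mul, map_mul,
        ihx (fun i hi => h i (by simp [mleaves]; exact Or.inl (by simpa using hi))),
        ihy (fun i hi => h i (by simp [mleaves]; exact Or.inr (by simpa using hi)))]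

lemma evalA_embed_update_add (w : FreeMagma (ℕ × H)) (j : ℕ)
    (hj : Multiset.count j ((mleaves w).map Prod.fst) = 1) (ψ : ℕ → A) (x y : A) :
    evalA F (Function.update ψ j (x + y)) (embedMonomial F H w) =
      evalA F (Function.update ψ j x) (embedMonomial F H w) +
        evalA F (Function.update ψ j y) (embedMonomial F H w) := by
  induction w with
  | ih1 a =>
      have ha : a.1 = j := by
        by_contra hne
        simp [mleaves, Multiset.count_singleton, hne] at hj
        omega
      subst ha
      rw [embedMonomial_of, evalA_of, evalA_of, evalA_of]
      simp [smul_add]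
  | ih2 u v ihu ihv =>
      have hcnt : Multiset.count j ((mleaves u).map Prod.fst) +
          Multiset.count j ((mleaves v).map Prod.fst) = 1 := by
        rw [mleaves_mul, Multiset.map_add] at hj
        simpa [Multiset.count_add] using hj
      have hmul : ∀ ψ' : ℕ → A, evalA F ψ' (embedMonomial F H (u * v)) =
          evalA F ψ' (embedMonomial F H u) * evalA F ψ' (embedMonomial F H v) := fun ψ' => by
        rw [embedMonomial_mul, map_mul]
      rcases Nat.eq_zero_or_pos (Multiset.count j ((mleaves u).map Prod.fst)) with h0 | hpos
      · -- j occurs only in v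
        have hv1 : Multiset.count j ((mleaves v).map Prod.fst) = 1 := by omega
        have hnot : j ∉ (mleaves u).map Prod.fst := by
          rw [← Multiset.count_eq_zero] at *; exact h0
        have hcong : ∀ z : A, evalA F (Function.update ψ j z) (embedMonomial F H u) =
            evalA F ψ (embedMonomial F H u) := fun z =>
          evalA_embed_congr _ _ _ (fun i hi =>
            Function.update_of_ne (fun he => hnot (by rwa [he] at hi)) _ _)
        rw [hmul, hmul, hmul, hcong, hcong, hcong, ihv hv1, mul_add]
      · have hu1 : Multiset.count j ((mleaves u).map Prod.fst) = 1 := by omega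
        have h0v : Multiset.count j ((mleaves v).map Prod.fst) = 0 := by omega
        have hnot : j ∉ (mleaves v).map Prod.fst := by
          rw [← Multiset.count_eq_zero] at *; exact h0v
        have hcong : ∀ z : A, evalA F (Function.update ψ j z) (embedMonomial F H v) =
            evalA F ψ (embedMonomial F H v) := fun z =>
          evalA_embed_congr _ _ _ (fun i hi =>
            Function.update_of_ne (fun he => hnot (by rwa [he] at hi)) _ _)
        rw [hmul, hmul, hmul, hcong, hcong, hcong, ihu hu1, add_mul]

lemma evalA_embed_update_smul (w : FreeMagma (ℕ × H)) (j : ℕ)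
    (hj : Multiset.count j ((mleaves w).map Prod.fst) = 1) (ψ : ℕ → A) (c : F) (x : A) :
    evalA F (Function.update ψ j (c • x)) (embedMonomial F H w) =
      c • evalA F (Function.update ψ j x) (embedMonomial F H w) := by
  induction w with
  | ih1 a =>
      have ha : a.1 = j := by
        by_contra hne
        simp [mleaves, Multiset.count_singleton, hne] at hj
        omega
      subst ha
      rw [embedMonomial_of, evalA_of, evalA_of]
      simp only [Function.update_self]
      exact (smul_comm c a.2 x).symm
  | ih2 u v ihu ihv =>
      have hcnt : Multiset.count j ((mleaves u).map Prod.fst) +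
          Multiset.count j ((mleaves v).map Prod.fst) = 1 := by
        rw [mleaves_mul, Multiset.map_add] at hj
        simpa [Multiset.count_add] using hj
      have hmul : ∀ ψ' : ℕ → A, evalA F ψ' (embedMonomial F H (u * v)) =
          evalA F ψ' (embedMonomial F H u) * evalA F ψ' (embedMonomial F H v) := fun ψ' => by
        rw [embedMonomial_mul, map_mul]
      rcases Nat.eq_zero_or_pos (Multiset.count j ((mleaves u).map Prod.fst)) with h0 | hpos
      · have hv1 : Multiset.count j ((mleaves v).map Prod.fst) = 1 := by omega
        have hnot : j ∉ (mleaves u).map Prod.fst := by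
          rw [← Multiset.count_eq_zero] at *; exact h0
        have hcong : ∀ z : A, evalA F (Function.update ψ j z) (embedMonomial F H u) =
            evalA F ψ (embedMonomial F H u) := fun z =>
          evalA_embed_congr _ _ _ (fun i hi =>
            Function.update_of_ne (fun he => hnot (by rwa [he] at hi)) _ _)
        rw [hmul, hmul, hcong, hcong, ihv hv1, mul_smul_comm]
      · have hu1 : Multiset.count j ((mleaves u).map Prod.fst) = 1 := by omega
        have h0v : Multiset.count j ((mleaves v).map Prod.fst) = 0 := by omega
        have hnot : j ∉ (mleaves v).map Prod.fst := by
          rw [← Multiset.count_eq_zero] at *; exact h0v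
        have hcong : ∀ z : A, evalA F (Function.update ψ j z) (embedMonomial F H v) =
            evalA F ψ (embedMonomial F H v) := fun z =>
          evalA_embed_congr _ _ _ (fun i hi =>
            Function.update_of_ne (fun he => hnot (by rwa [he] at hi)) _ _)
        rw [hmul, hmul, hcong, hcong, ihu hu1, smul_mul_assoc]

end Eval

end PIExp
namespace PIExp
set_option linter.unusedSectionVars false

section Ev

variable {F : Type} [Field F] {H : Type} [Semiring H]
variable {A : Type} [NonUnitalNonAssocSemiring A] [Module F A]
  [SMulCommClass F A A] [IsScalarTower F A A] [Module H A] [SMulCommClass F H A]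

/-- Extend a tuple to a substitution, by zero. -/
def extFun {n : ℕ} (v : Fin n → A) : ℕ → A := fun i => if h : i < n then v ⟨i, h⟩ else 0

variable (F H A) in
/-- Evaluation as a linear map into the space of functions `(Fin n → A) → A`. -/
def Ev (n : ℕ) : FreeNA F H →ₗ[F] ((Fin n → A) → A) where
  toFun f := fun v => evalA F (extFun v) f
  map_add' f g := by funext v; exact map_add _ f g
  map_smul' c f := by funext v; exact map_smul (evalA F (extFun v) : FreeNA F H →ₙₐ[F] A) c f

lemma Ev_apply (n : ℕ) (f : FreeNA F H) (v : Fin n → A) :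
    Ev F H A n f v = evalA F (extFun v) f := rfl

lemma extFun_update {n : ℕ} (v : Fin n → A) (j : Fin n) (x : A) :
    extFun (Function.update v j x) = Function.update (extFun v) (j : ℕ) x := by
  funext i
  by_cases h : i < n
  · by_cases hij : i = (j : ℕ)
    · subst hij
      simp [extFun, h, Function.update, Fin.ext_iff]
    · have hne : (⟨i, h⟩ : Fin n) ≠ j := by simpa [Fin.ext_iff] using hij
      rw [Function.update_of_ne hij]
      simp only [extFun, dif_pos h]
      rw [Function.update_of_ne hne]
  · have : i ≠ (j : ℕ) := fun he => h (he ▸ j.isLt)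
    rw [Function.update_of_ne this]
    simp [extFun, h]

variable (F A) in
/-- The submodule of functions `(Fin n → A) → A` that are multilinear. -/
def MSub (n : ℕ) : Submodule F ((Fin n → A) → A) where
  carrier := {G | (∀ (j : Fin n) (v : Fin n → A) (x y : A),
      G (Function.update v j (x + y)) = G (Function.update v j x) + G (Function.update v j y)) ∧
    ∀ (j : Fin n) (v : Fin n → A) (c : F) (x : A),
      G (Function.update v j (c • x)) = c • G (Function.update v j x)}
  add_mem' := by
    rintro G G' ⟨ha, hs⟩ ⟨ha', hs'⟩
    refine ⟨fun j v x y => ?_, fun j v c x => ?_⟩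
    · simp only [Pi.add_apply, ha j v x y, ha' j v x y]; abel
    · simp only [Pi.add_apply, hs j v c x, hs' j v c x, smul_add]
  zero_mem' := ⟨fun _ _ _ _ => by simp, fun _ _ _ _ => by simp⟩
  smul_mem' := by
    rintro c G ⟨ha, hs⟩
    refine ⟨fun j v x y => ?_, fun j v a x => ?_⟩
    · simp only [Pi.smul_apply, ha j v x y, smul_add]
    · simp only [Pi.smul_apply, hs j v a x]
      rw [smul_comm]

lemma count_range_eq_one {n j : ℕ} (hj : j < n) : Multiset.count j (Multiset.range n) = 1 := by
  exact Multiset.count_eq_one_of_mem (Multiset.nodup_range n) (Multiset.mem_range.mpr hj)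

lemma Wn_le_comap_MSub (n : ℕ) :
    Wn F H n ≤ (MSub F A n).comap (Ev F H A n) := by
  rw [Wn, Submodule.span_le]
  rintro f ⟨w, hw, rfl⟩
  refine ⟨fun j v x y => ?_, fun j v c x => ?_⟩
  · have hc : Multiset.count (j : ℕ) ((mleaves w).map Prod.fst) = 1 := by
      rw [hw]; exact count_range_eq_one j.isLt
    simp only [Ev_apply, extFun_update]
    exact evalA_embed_update_add w j hc _ x y
  · have hc : Multiset.count (j : ℕ) ((mleaves w).map Prod.fst) = 1 := by
      rw [hw]; exact count_range_eq_one j.isLt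
    simp only [Ev_apply, extFun_update]
    exact evalA_embed_update_smul w j hc _ c x

lemma Ev_relabel {n : ℕ} (τ : Equiv.Perm (Fin n)) (f : FreeNA F H) (v : Fin n → A) :
    Ev F H A n (relabelL F H (permNat τ) f) v = Ev F H A n f (fun i => v (τ i)) := by
  show evalA F (extFun v) (relabelHom F H (permNat τ) f) = _
  rw [evalA_relabel]
  have : extFun v ∘ permNat τ = extFun (fun i => v (τ i)) := by
    funext i
    by_cases h : i < n
    · simp [extFun, Function.comp, permNat, h]
    · simp [extFun, Function.comp, permNat, h]
  rw [this, Ev_apply]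

lemma Ev_youngE {n : ℕ} (Tb : Fin n → ℕ × ℕ) (f : FreeNA F H) (v : Fin n → A) :
    Ev F H A n (youngE F H Tb f) v =
      ∑ π ∈ rowStab Tb, ∑ σ ∈ colStab Tb,
        ((Equiv.Perm.sign σ : ℤ) : F) • Ev F H A n f (fun i => v (π (σ i))) := by
  rw [youngE]
  simp only [LinearMap.sum_apply, LinearMap.smul_apply, map_sum, map_smul,
    Finset.sum_apply, Pi.smul_apply]
  refine Finset.sum_congr rfl fun π _ => Finset.sum_congr rfl fun σ _ => ?_
  rw [Ev_relabel]
  rfl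

end Ev

end PIExp
namespace PIExp
set_option linter.unusedSectionVars false

section Young

variable {F : Type} [Field F] {H : Type} [Semiring H]
variable {A : Type} [NonUnitalNonAssocSemiring A] [Module F A]
  [SMulCommClass F A A] [IsScalarTower F A A] [Module H A] [SMulCommClass F H A]

lemma rowStab_mul {n : ℕ} {Tb : Fin n → ℕ × ℕ} {a b : Equiv.Perm (Fin n)}
    (ha : a ∈ rowStab Tb) (hb : b ∈ rowStab Tb) : a * b ∈ rowStab Tb := by
  simp only [rowStab, Finset.mem_filter, Finset.mem_univ, true_and] at *
  intro m
  rw [Equiv.Perm.mul_apply, ha (b m), hb m]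

lemma rowStab_inv {n : ℕ} {Tb : Fin n → ℕ × ℕ} {a : Equiv.Perm (Fin n)}
    (ha : a ∈ rowStab Tb) : a⁻¹ ∈ rowStab Tb := by
  simp only [rowStab, Finset.mem_filter, Finset.mem_univ, true_and] at *
  intro m
  conv_rhs => rw [← show a (a⁻¹ m) = m from by simp]
  rw [ha (a⁻¹ m)]

lemma colStab_mul {n : ℕ} {Tb : Fin n → ℕ × ℕ} {a b : Equiv.Perm (Fin n)}
    (ha : a ∈ colStab Tb) (hb : b ∈ colStab Tb) : a * b ∈ colStab Tb := by
  simp only [colStab, Finset.mem_filter, Finset.mem_univ, true_and] at *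
  intro m
  rw [Equiv.Perm.mul_apply, ha (b m), hb m]

/-- A multilinear function vanishing on all tuples of basis vectors vanishes. -/
lemma zero_on_basis {n d : ℕ} (bas : Module.Basis (Fin d) F A) (G : (Fin n → A) → A)
    (hG : G ∈ MSub F A n) (h0 : ∀ ι : Fin n → Fin d, G (fun i => bas (ι i)) = 0) :
    G = 0 := by
  obtain ⟨hadd, hsmul⟩ := hG
  have hzero : ∀ (j : Fin n) (v : Fin n → A), G (Function.update v j 0) = 0 := by
    intro j v
    have := hsmul j v 0 0
    simpa using this
  have hsum : ∀ (j : Fin n) (v : Fin n → A) (s : Finset (Fin d)) (x : Fin d → A),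
      G (Function.update v j (∑ k ∈ s, x k)) = ∑ k ∈ s, G (Function.update v j (x k)) := by
    intro j v s x
    induction s using Finset.induction with
    | empty => simpa using hzero j v
    | insert _ _ hnm ih =>
        rw [Finset.sum_insert hnm, Finset.sum_insert hnm, hadd, ih]
  have main : ∀ (k : ℕ), k ≤ n → ∀ v : Fin n → A,
      (∀ i : Fin n, k ≤ (i : ℕ) → ∃ j, v i = bas j) → G v = 0 := by
    intro k
    induction k with
    | zero =>
        intro _ v hv
        choose ι hι using fun i => hv i (Nat.zero_le _)
        have : v = fun i => bas (ι i) := funext fun i => hι i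
        rw [this]; exact h0 ι
    | succ k ih =>
        intro hk v hv
        have hkn : k < n := hk
        set j₀ : Fin n := ⟨k, hkn⟩
        have hrep : v = Function.update v j₀ (∑ i : Fin d, bas.repr (v j₀) i • bas i) := by
          rw [Module.Basis.sum_repr]
          simp
        rw [hrep, hsum]
        refine Finset.sum_eq_zero fun i _ => ?_
        rw [hsmul]
        rw [ih (le_of_lt hk) _ ?_, smul_zero]
        intro m hm
        by_cases hmj : m = j₀
        · subst hmj
          exact ⟨i, by simp⟩
        · rw [Function.update_of_ne hmj]
          refine hv m ?_
          have hne : (m : ℕ) ≠ k := fun he => hmj (Fin.ext he)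
          omega
  funext v
  exact main n le_rfl v (fun i hi => absurd hi (by simp [i.isLt, Nat.not_le]))

/-- Alternating sum over the column stabilizer vanishes if some column is longer
than the dimension. -/
lemma alt_sum_eq_zero {n d : ℕ} (bas : Module.Basis (Fin d) F A) (Tb : Fin n → ℕ × ℕ)
    (hcard : d < (Finset.univ.filter (fun m : Fin n => (Tb m).2 = 0)).card)
    (G : (Fin n → A) → A) (hG : G ∈ MSub F A n) (u : Fin n → A) :
    ∑ σ ∈ colStab Tb, ((Equiv.Perm.sign σ : ℤ) : F) • G (fun i => u (σ i)) = 0 := by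
  classical
  -- the alternating sum as a function of `u`
  set Galt : (Fin n → A) → A :=
    ∑ σ ∈ colStab Tb, ((Equiv.Perm.sign σ : ℤ) : F) • (fun u : Fin n → A => G (fun i => u (σ i)))
    with hGalt
  have hGalt_apply : ∀ u : Fin n → A,
      Galt u = ∑ σ ∈ colStab Tb, ((Equiv.Perm.sign σ : ℤ) : F) • G (fun i => u (σ i)) := by
    intro u; rw [hGalt]; simp [Finset.sum_apply]
  have hmem : Galt ∈ MSub F A n := by
    refine Submodule.sum_mem _ fun σ _ => Submodule.smul_mem _ _ ?_
    obtain ⟨hadd, hsmul⟩ := hG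
    refine ⟨fun j v x y => ?_, fun j v c x => ?_⟩
    · have h1 : ∀ z : A, (fun i => Function.update v j z (σ i)) =
          Function.update (fun i => v (σ i)) (σ⁻¹ j) z := by
        intro z; funext i
        by_cases hij : σ i = j
        · have : i = σ⁻¹ j := by rw [← hij]; simp
          subst this
          rw [hij]; simp
        · have : i ≠ σ⁻¹ j := fun he => hij (by rw [he]; simp)
          rw [Function.update_of_ne hij, Function.update_of_ne this]
      simp only [h1]
      exact hadd _ _ x y
    · have h1 : ∀ z : A, (fun i => Function.update v j z (σ i)) =
          Function.update (fun i => v (σ i)) (σ⁻¹ j) z := by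
        intro z; funext i
        by_cases hij : σ i = j
        · have : i = σ⁻¹ j := by rw [← hij]; simp
          subst this
          rw [hij]; simp
        · have : i ≠ σ⁻¹ j := fun he => hij (by rw [he]; simp)
          rw [Function.update_of_ne hij, Function.update_of_ne this]
      simp only [h1]
      exact hsmul _ _ c x
  have hbasis : ∀ ι : Fin n → Fin d, Galt (fun i => bas (ι i)) = 0 := by
    intro ι
    -- pigeonhole: two distinct entries of column `0` get the same basis index
    have hmap : ∀ m ∈ Finset.univ.filter (fun m : Fin n => (Tb m).2 = 0),
        ι m ∈ (Finset.univ : Finset (Fin d)) := fun m _ => Finset.mem_univ _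
    obtain ⟨a, ha, b, hb, hab, hfab⟩ :=
      Finset.exists_ne_map_eq_of_card_lt_of_maps_to (by simpa using hcard) hmap
    have hTa : (Tb a).2 = 0 := (Finset.mem_filter.mp ha).2
    have hTb2 : (Tb b).2 = 0 := (Finset.mem_filter.mp hb).2
    have hswap : Equiv.swap a b ∈ colStab Tb := by
      simp only [colStab, Finset.mem_filter, Finset.mem_univ, true_and]
      intro m
      rcases eq_or_ne m a with rfl | hma
      · rw [Equiv.swap_apply_left, hTb2, hTa]
      rcases eq_or_ne m b with rfl | hmb
      · rw [Equiv.swap_apply_right, hTa, hTb2]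
      · rw [Equiv.swap_apply_of_ne_of_ne hma hmb]
    have hufix : (fun i : Fin n => bas (ι (Equiv.swap a b i))) = fun i => bas (ι i) := by
      funext i
      rcases eq_or_ne i a with rfl | hia
      · rw [Equiv.swap_apply_left, ← hfab]
      rcases eq_or_ne i b with rfl | hib
      · rw [Equiv.swap_apply_right, hfab]
      · rw [Equiv.swap_apply_of_ne_of_ne hia hib]
    rw [hGalt_apply]
    refine Finset.sum_involution (fun σ _ => Equiv.swap a b * σ) ?_ ?_ ?_ ?_
    · intro σ hσ
      have hsign : ((Equiv.Perm.sign (Equiv.swap a b * σ) : ℤ) : F) =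
          -((Equiv.Perm.sign σ : ℤ) : F) := by
        rw [Equiv.Perm.sign_mul, Equiv.Perm.sign_swap hab]
        push_cast
        ring
      have harg : (fun i => bas (ι ((Equiv.swap a b * σ) i))) =
          (fun i : Fin n => bas (ι (σ i))) := by
        funext i
        have := congrFun hufix (σ i)
        simpa using this
      rw [hsign, harg]
      module
    · intro σ _ _ hc
      have h1 : Equiv.swap a b = 1 := mul_right_cancel (hc.trans (one_mul σ).symm)
      have := congrFun (congrArg (fun (e : Equiv.Perm (Fin n)) => e.toFun) h1) a
      simp [Equiv.swap_apply_left] at this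
      exact hab this.symm
    · intro σ hσ
      exact colStab_mul hswap hσ
    · intro σ _
      show Equiv.swap a b * (Equiv.swap a b * σ) = σ
      rw [← mul_assoc, Equiv.swap_mul_self, one_mul]
  have := zero_on_basis bas Galt hmem hbasis
  rw [← hGalt_apply u, this]
  rfl

end Young

end PIExp
namespace PIExp
set_option linter.unusedSectionVars false

section Transfer

variable {F : Type} [Field F] {H : Type} [Semiring H]
variable {A : Type} [NonUnitalNonAssocRing A] [Module F A]
  [SMulCommClass F A A] [IsScalarTower F A A] [Module H A] [SMulCommClass F H A]

lemma mleaves_map {α β : Type} (φ : α → β) (w : FreeMagma α) :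
    mleaves (FreeMagma.map φ w) = (mleaves w).map φ := by
  induction w with
  | ih1 a => rfl
  | ih2 x y ihx ihy =>
      rw [show FreeMagma.map φ (x * y) = FreeMagma.map φ x * FreeMagma.map φ y from rfl,
        mleaves_mul, mleaves_mul, Multiset.map_add, ihx, ihy]

lemma relabelHom_embedMonomial (g : ℕ → ℕ) (w : FreeMagma (ℕ × H)) :
    relabelHom F H g (embedMonomial F H w) =
      embedMonomial F H (FreeMagma.map (fun p : ℕ × H => (g p.1, p.2)) w) := by
  induction w with
  | ih1 a =>
      rw [embedMonomial_of]
      simp [relabelHom, embedMonomial]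
  | ih2 x y ihx ihy =>
      rw [embedMonomial_mul, map_mul, ihx, ihy,
        show FreeMagma.map (fun p : ℕ × H => (g p.1, p.2)) (x * y) =
          FreeMagma.map _ x * FreeMagma.map _ y from rfl, embedMonomial_mul]

lemma range_map_permNat {n : ℕ} (τ : Equiv.Perm (Fin n)) :
    (Multiset.range n).map (permNat τ) = Multiset.range n := by
  have hinj : Set.InjOn (permNat τ) (Finset.range n) := by
    intro i hi j hj hij
    simp only [Finset.coe_range, Set.mem_Iio] at hi hj
    simp only [permNat, dif_pos hi, dif_pos hj] at hij
    have : (⟨i, hi⟩ : Fin n) = ⟨j, hj⟩ := τ.injective (Fin.ext hij)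
    simpa [Fin.ext_iff] using this
  have himg : (Finset.range n).image (permNat τ) = Finset.range n := by
    apply Finset.eq_of_subset_of_card_le
    · intro j hj
      simp only [Finset.mem_image] at hj
      obtain ⟨i, hi, rfl⟩ := hj
      simp only [Finset.mem_range] at hi ⊢
      simp [permNat, dif_pos hi]
    · rw [Finset.card_image_of_injOn hinj]
  calc (Multiset.range n).map (permNat τ) = ((Finset.range n).image (permNat τ)).val := by
        rw [Finset.image_val_of_injOn hinj]; rfl
    _ = Multiset.range n := by rw [himg]; rfl

lemma relabelL_Wn_le {n : ℕ} (τ : Equiv.Perm (Fin n)) :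
    (Wn F H n).map (relabelL F H (permNat τ)) ≤ Wn F H n := by
  rw [Submodule.map_le_iff_le_comap, Wn, Submodule.span_le]
  rintro f ⟨w, hw, rfl⟩
  show relabelL F H (permNat τ) (embedMonomial F H w) ∈ Wn F H n
  rw [show relabelL F H (permNat τ) (embedMonomial F H w) =
      relabelHom F H (permNat τ) (embedMonomial F H w) from rfl, relabelHom_embedMonomial]
  apply Submodule.subset_span
  refine ⟨_, ?_, rfl⟩
  rw [mleaves_map, Multiset.map_map]
  have : (Prod.fst ∘ fun p : ℕ × H => (permNat τ p.1, p.2)) = permNat τ ∘ Prod.fst := rfl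
  rw [this, ← Multiset.map_map, hw, range_map_permNat]

lemma youngE_Wn_le {n : ℕ} (Tb : Fin n → ℕ × ℕ) :
    (Wn F H n).map (youngE F H Tb) ≤ Wn F H n := by
  rw [Submodule.map_le_iff_le_comap]
  intro f hf
  show youngE F H Tb f ∈ Wn F H n
  rw [youngE]
  simp only [LinearMap.sum_apply, LinearMap.smul_apply]
  refine Submodule.sum_mem _ fun π _ => Submodule.sum_mem _ fun σ _ =>
    Submodule.smul_mem _ _ ?_
  exact relabelL_Wn_le _ (Submodule.mem_map_of_mem hf)

lemma evalA_eq_Ev_of_mem_Wn {n : ℕ} {f : FreeNA F H} (hf : f ∈ Wn F H n) (ψ : ℕ → A) :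
    evalA F ψ f = Ev F H A n f (fun i : Fin n => ψ i) := by
  have hext : ∀ g ∈ {f | ∃ w : FreeMagma (ℕ × H),
      (mleaves w).map Prod.fst = Multiset.range n ∧ f = embedMonomial F H w},
      evalA F ψ g = evalA F (extFun (fun i : Fin n => ψ (i : ℕ))) g := by
    rintro g ⟨w, hw, rfl⟩
    refine evalA_embed_congr w _ _ fun i hi => ?_
    rw [hw, Multiset.mem_range] at hi
    simp [extFun, hi]
  refine Submodule.span_induction (p := fun g _ =>
      evalA F ψ g = Ev F H A n g (fun i : Fin n => ψ (i : ℕ))) ?_ ?_ ?_ ?_ hf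
  · intro x hx; rw [Ev_apply]; exact hext x hx
  · simp
  · intro x y _ _ hx hy
    rw [map_add, map_add, hx, hy]; rfl
  · intro c x _ hx
    rw [map_smul, map_smul, hx]; rfl

lemma mem_IdH_iff_Ev {n : ℕ} {f : FreeNA F H} (hf : f ∈ Wn F H n) :
    f ∈ IdH F A H ↔ Ev F H A n f = 0 := by
  rw [IdH_eq_iInf, Submodule.mem_iInf]
  constructor
  · intro h
    funext v
    exact LinearMap.mem_ker.mp (h (extFun v))
  · intro h ψ
    rw [LinearMap.mem_ker]
    change evalA F ψ f = 0
    rw [evalA_eq_Ev_of_mem_Wn hf, h]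
    rfl

lemma finrank_map_mkQ_eq {n : ℕ} (S' : Submodule F (FreeNA F H)) (hS : S' ≤ Wn F H n) :
    Module.finrank F (S'.map (IdH F A H).mkQ) = Module.finrank F (S'.map (Ev F H A n)) := by
  have hk : LinearMap.ker ((IdH F A H).mkQ ∘ₗ S'.subtype) =
      LinearMap.ker ((Ev F H A n) ∘ₗ S'.subtype) := by
    ext x
    simp only [LinearMap.mem_ker, LinearMap.comp_apply, Submodule.subtype_apply,
      Submodule.mkQ_apply, Submodule.Quotient.mk_eq_zero]
    exact mem_IdH_iff_Ev (hS x.2)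
  have hr1 : LinearMap.range ((IdH F A H).mkQ ∘ₗ S'.subtype) = S'.map (IdH F A H).mkQ := by
    rw [LinearMap.range_comp, Submodule.range_subtype]
  have hr2 : LinearMap.range ((Ev F H A n) ∘ₗ S'.subtype) = S'.map (Ev F H A n) := by
    rw [LinearMap.range_comp, Submodule.range_subtype]
  have e1 := LinearMap.quotKerEquivRange ((IdH F A H).mkQ ∘ₗ S'.subtype)
  have e2 := LinearMap.quotKerEquivRange ((Ev F H A n) ∘ₗ S'.subtype)
  have e3 := Submodule.quotEquivOfEq _ _ hk
  rw [← hr1, ← hr2]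
  rw [← LinearEquiv.finrank_eq e1, ← LinearEquiv.finrank_eq e2]
  exact LinearEquiv.finrank_eq e3

end Transfer

end PIExp
namespace PIExp
set_option linter.unusedSectionVars false

section Partitions

lemma list_sum_getD (L : List ℕ) : ∑ i ∈ Finset.range L.length, L.getD i 0 = L.sum := by
  induction L with
  | nil => simp
  | cons a t ih =>
      rw [List.length_cons, Finset.sum_range_succ']
      simp only [List.getD_cons_succ, List.getD_cons_zero, ih, List.sum_cons]
      omega

variable {n : ℕ} (p : Nat.Partition n)

/-- Number of parts. -/
def numParts : ℕ := Multiset.card p.parts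

lemma length_partList : ((p.parts.sort (· ≤ ·)).reverse).length = numParts p := by
  rw [List.length_reverse, Multiset.length_sort]; rfl

lemma partFn_antitone {i j : ℕ} (hij : i ≤ j) : partFn p j ≤ partFn p i := by
  set L := (p.parts.sort (· ≤ ·)).reverse with hL
  have hsorted : List.Pairwise (· ≥ ·) L := by
    have hs := Multiset.pairwise_sort (r := (· ≤ ·)) (s := p.parts)
    rw [hL, List.pairwise_reverse]
    exact hs
  by_cases hj : j < L.length
  · have hi : i < L.length := lt_of_le_of_lt hij hj
    rcases eq_or_lt_of_le hij with rfl | hlt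
    · exact le_refl _
    · rw [partFn, partFn, ← hL, List.getD_eq_getElem _ _ hj, List.getD_eq_getElem _ _ hi]
      have := List.Pairwise.rel_get_of_lt hsorted (a := ⟨i, hi⟩) (b := ⟨j, hj⟩) hlt
      simpa using this
  · rw [partFn, ← hL, List.getD_eq_default _ _ (Nat.le_of_not_lt hj)]
    exact Nat.zero_le _

lemma partFn_pos {i : ℕ} (hi : i < numParts p) : 0 < partFn p i := by
  have hlen : i < ((p.parts.sort (· ≤ ·)).reverse).length := by
    rw [length_partList]; exact hi
  rw [partFn, List.getD_eq_getElem _ _ hlen]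
  apply p.parts_pos
  have h1 : ((p.parts.sort (· ≤ ·)).reverse)[i] ∈ (p.parts.sort (· ≤ ·)).reverse :=
    List.getElem_mem _
  rw [List.mem_reverse] at h1
  rw [← Multiset.mem_sort (· ≤ ·)]
  exact h1

lemma partFn_zero {i : ℕ} (hi : numParts p ≤ i) : partFn p i = 0 := by
  rw [partFn, List.getD_eq_default]
  rw [length_partList]; exact hi

lemma partFn_sum_numParts : ∑ i ∈ Finset.range (numParts p), partFn p i = n := by
  have h0 := list_sum_getD ((p.parts.sort (· ≤ ·)).reverse)
  rw [length_partList] at h0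
  have h1 : ∑ i ∈ Finset.range (numParts p), partFn p i =
      ((p.parts.sort (· ≤ ·)).reverse).sum := h0
  rw [h1]
  have h2 : (((p.parts.sort (· ≤ ·)).reverse : List ℕ) : Multiset ℕ) = p.parts := by
    rw [Multiset.coe_reverse, Multiset.sort_eq]
  calc ((p.parts.sort (· ≤ ·)).reverse).sum
      = (((p.parts.sort (· ≤ ·)).reverse : List ℕ) : Multiset ℕ).sum := by
        rw [Multiset.sum_coe]
    _ = p.parts.sum := by rw [h2]
    _ = n := p.parts_sum

lemma partFn_sum {K : ℕ} (hK : numParts p ≤ K) :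
    ∑ i ∈ Finset.range K, partFn p i = n := by
  rw [Finset.range_eq_Ico, ← Finset.sum_Ico_consecutive _ (Nat.zero_le (numParts p)) hK,
    ← Finset.range_eq_Ico, partFn_sum_numParts]
  have : ∑ i ∈ Finset.Ico (numParts p) K, partFn p i = 0 :=
    Finset.sum_eq_zero fun i hi => partFn_zero p (Finset.mem_Ico.mp hi).1
  rw [this]
  omega

lemma partFn_le (i : ℕ) : partFn p i ≤ n := by
  by_cases hi : i < numParts p
  · calc partFn p i ≤ ∑ j ∈ Finset.range (numParts p), partFn p j :=
        Finset.single_le_sum (fun _ _ => Nat.zero_le _) (Finset.mem_range.mpr hi)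
    _ = n := partFn_sum_numParts p
  · rw [partFn_zero p (Nat.le_of_not_lt hi)]; exact Nat.zero_le _

/-- The basic invariant of the canonical filling. -/
lemma cellOf_spec : ∀ m, m < n →
    (cellOf (partFn p) m).2 < partFn p (cellOf (partFn p) m).1 ∧
      (∑ i ∈ Finset.range (cellOf (partFn p) m).1, partFn p i) + (cellOf (partFn p) m).2 = m := by
  intro m
  induction m with
  | zero =>
      intro h0
      have hk : 0 < numParts p := by
        by_contra hk
        have : numParts p = 0 := by omega
        have := partFn_sum p (K := 0) (by omega)
        simp at this
        omega
      constructor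
      · exact partFn_pos p hk
      · simp [cellOf]
  | succ m ih =>
      intro hlt
      obtain ⟨h1, h2⟩ := ih (by omega)
      have hstep : cellOf (partFn p) (m+1) =
          (if (cellOf (partFn p) m).2 + 1 < partFn p (cellOf (partFn p) m).1
            then ((cellOf (partFn p) m).1, (cellOf (partFn p) m).2 + 1)
            else ((cellOf (partFn p) m).1 + 1, 0)) := rfl
      rw [hstep]
      set c := cellOf (partFn p) m with hc
      by_cases hbr : c.2 + 1 < partFn p c.1
      · rw [if_pos hbr]
        exact ⟨hbr, by simp only []; omega⟩
      · rw [if_neg hbr]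
        have hfull : partFn p c.1 = c.2 + 1 := by omega
        have hsum1 : ∑ i ∈ Finset.range (c.1 + 1), partFn p i = m + 1 := by
          rw [Finset.sum_range_succ]; omega
        have hpos : 0 < partFn p (c.1 + 1) := by
          by_contra hz
          have hz0 : partFn p (c.1 + 1) = 0 := by omega
          set K := max (numParts p) (c.1 + 1) with hK
          have hsum2 : ∑ i ∈ Finset.range K, partFn p i = n :=
            partFn_sum p (le_max_left _ _)
          have : ∑ i ∈ Finset.range K, partFn p i =
              ∑ i ∈ Finset.range (c.1 + 1), partFn p i := by
            rw [Finset.range_eq_Ico,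
              ← Finset.sum_Ico_consecutive _ (Nat.zero_le (c.1+1)) (le_max_right _ _)]
            have hz1 : ∑ i ∈ Finset.Ico (c.1 + 1) K, partFn p i = 0 :=
              Finset.sum_eq_zero fun i hi => by
                have hge : c.1 + 1 ≤ i := (Finset.mem_Ico.mp hi).1
                have := partFn_antitone p hge
                omega
            rw [hz1, ← Finset.range_eq_Ico]
            omega
          omega
        refine ⟨hpos, ?_⟩
        simp only []
        omega

lemma canonT_row_lt (m : Fin n) : (canonT p m).1 < numParts p := by
  obtain ⟨h1, _⟩ := cellOf_spec p m m.isLt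
  by_contra hge
  rw [partFn_zero p (Nat.le_of_not_lt hge :
    numParts p ≤ (cellOf (partFn p) ((m : Fin n) : ℕ)).1)] at h1
  omega

lemma cellOf_rowStart {r : ℕ} (hr : r < numParts p) :
    (∑ i ∈ Finset.range r, partFn p i) < n ∧
      cellOf (partFn p) (∑ i ∈ Finset.range r, partFn p i) = (r, 0) := by
  have hmono : ∀ {a b : ℕ}, a ≤ b →
      ∑ i ∈ Finset.range a, partFn p i ≤ ∑ i ∈ Finset.range b, partFn p i := fun hab =>
    Finset.sum_le_sum_of_subset (Finset.range_subset_range.mpr hab)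
  set mr := ∑ i ∈ Finset.range r, partFn p i with hmr
  have hlt : mr < n := by
    have hbig : ∑ i ∈ Finset.range (r+1), partFn p i ≤ n := by
      calc ∑ i ∈ Finset.range (r+1), partFn p i
          ≤ ∑ i ∈ Finset.range (max (numParts p) (r+1)), partFn p i :=
            hmono (le_max_right _ _)
        _ = n := partFn_sum p (le_max_left _ _)
    have hp := partFn_pos p hr
    rw [Finset.sum_range_succ] at hbig
    omega
  refine ⟨hlt, ?_⟩
  obtain ⟨h1, h2⟩ := cellOf_spec p mr hlt
  set c := cellOf (partFn p) mr with hc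
  have hr' : c.1 = r := by
    rcases Nat.lt_trichotomy c.1 r with h | h | h
    · have : ∑ i ∈ Finset.range (c.1 + 1), partFn p i ≤ mr := hmono h
      rw [Finset.sum_range_succ] at this
      omega
    · exact h
    · have : ∑ i ∈ Finset.range (r + 1), partFn p i ≤ ∑ i ∈ Finset.range c.1, partFn p i :=
        hmono h
      rw [Finset.sum_range_succ] at this
      have hp := partFn_pos p hr
      omega
  have hc2 : c.2 = 0 := by
    rw [hr'] at h2
    omega
  have hfin : c = (r, 0) := Prod.ext hr' hc2
  exact hfin

lemma numParts_le_colCard :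
    numParts p ≤ (Finset.univ.filter (fun m : Fin n => (canonT p m).2 = 0)).card := by
  rcases Nat.eq_zero_or_pos (numParts p) with h0 | hpos
  · rw [h0]; exact Nat.zero_le _
  have key := fun {r} (h : r < numParts p) => cellOf_rowStart p h
  set f : ℕ → Fin n := fun r => if h : r < numParts p then
      ⟨∑ i ∈ Finset.range r, partFn p i, (key h).1⟩ else
      ⟨∑ i ∈ Finset.range 0, partFn p i, (key hpos).1.trans_le' (by simp)⟩ with hf
  have hcell : ∀ r, r < numParts p → canonT p (f r) = (r, 0) := by
    intro r hr
    show cellOf (partFn p) ((f r : Fin n) : ℕ) = (r, 0)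
    rw [hf]
    simp only [dif_pos hr]
    exact (key hr).2
  have := Finset.card_le_card_of_injOn f (fun r hr => ?_) (fun r hr r' hr' he => ?_)
    (s := Finset.range (numParts p))
    (t := Finset.univ.filter (fun m : Fin n => (canonT p m).2 = 0))
  · simpa using this
  · rw [Finset.mem_coe, Finset.mem_range] at hr
    rw [Finset.mem_coe, Finset.mem_filter]
    exact ⟨Finset.mem_univ _, by rw [hcell r hr]⟩
  · rw [Finset.mem_coe, Finset.mem_range] at hr hr'
    have h1 := hcell r hr
    have h2 := hcell r' hr'
    rw [he] at h1
    rw [h1] at h2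
    exact (Prod.ext_iff.mp h2).1

end Partitions

end PIExp
namespace PIExp
set_option linter.unusedSectionVars false

section Counting

open Finset

/-- Two functions with the same fiber cardinalities differ by a permutation. -/
lemma exists_perm_comp_eq {α β : Type} [Fintype α] [DecidableEq α] [DecidableEq β]
    (f g : α → β)
    (h : ∀ b, (univ.filter fun a => f a = b).card = (univ.filter fun a => g a = b).card) :
    ∃ ρ : Equiv.Perm α, ∀ a, f (ρ a) = g a := by
  have hcard : ∀ b, Fintype.card {a // g a = b} = Fintype.card {a // f a = b} := by
    intro b
    rw [Fintype.card_subtype, Fintype.card_subtype]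
    exact (h b).symm
  let e : ∀ b, {a // g a = b} ≃ {a // f a = b} := fun b => Fintype.equivOfCardEq (hcard b)
  let ρ : α ≃ α :=
    ((Equiv.sigmaFiberEquiv g).symm.trans (Equiv.sigmaCongrRight e)).trans
      (Equiv.sigmaFiberEquiv f)
  refine ⟨ρ, fun a => ?_⟩
  show f (((Equiv.sigmaFiberEquiv f) ((Equiv.sigmaCongrRight e)
    ((Equiv.sigmaFiberEquiv g).symm a)))) = g a
  have h1 : (Equiv.sigmaFiberEquiv g).symm a = ⟨g a, ⟨a, rfl⟩⟩ := rfl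
  rw [h1]
  have h2 : (Equiv.sigmaCongrRight e) (⟨g a, ⟨a, rfl⟩⟩ : Σ b, {x // g x = b}) =
      ⟨g a, e (g a) ⟨a, rfl⟩⟩ := rfl
  rw [h2]
  exact (e (g a) ⟨a, rfl⟩).2

variable {n d : ℕ}

/-- Count matrix of a coloring `ι` relative to the rows of a tableau. -/
def cntF (Tb : Fin n → ℕ × ℕ) (ι : Fin n → Fin d) : Fin d × Fin d → Fin (n + 1) :=
  fun rj => ⟨(univ.filter (fun m : Fin n => (Tb m).1 = (rj.1 : ℕ) ∧ ι m = rj.2)).card,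
    by
      have h1 : (univ.filter (fun m : Fin n => (Tb m).1 = (rj.1 : ℕ) ∧ ι m = rj.2)).card ≤
          (univ : Finset (Fin n)).card := Finset.card_filter_le _ _
      simpa using Nat.lt_succ_of_le (by simpa using h1)⟩

lemma exists_rowPerm (Tb : Fin n → ℕ × ℕ) (hT : ∀ m, (Tb m).1 < d)
    (ι ι' : Fin n → Fin d) (h : cntF Tb ι = cntF Tb ι') :
    ∃ ρ ∈ rowStab Tb, (fun m => ι (ρ m)) = ι' := by
  classical
  have hfib : ∀ b : ℕ × Fin d,
      (univ.filter fun m : Fin n => ((Tb m).1, ι m) = b).card =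
        (univ.filter fun m : Fin n => ((Tb m).1, ι' m) = b).card := by
    rintro ⟨r, j⟩
    by_cases hr : r < d
    · have := congrFun h (⟨r, hr⟩, j)
      rw [Fin.ext_iff] at this
      simp only [cntF] at this
      have hl : (univ.filter fun m : Fin n => ((Tb m).1, ι m) = (r, j)) =
          (univ.filter (fun m : Fin n => (Tb m).1 = r ∧ ι m = j)) := by
        apply Finset.filter_congr
        intro m _
        simp [Prod.ext_iff]
      have hr' : (univ.filter fun m : Fin n => ((Tb m).1, ι' m) = (r, j)) =
          (univ.filter (fun m : Fin n => (Tb m).1 = r ∧ ι' m = j)) := by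
        apply Finset.filter_congr
        intro m _
        simp [Prod.ext_iff]
      rw [hl, hr']
      simpa using this
    · have hempty : ∀ ι'' : Fin n → Fin d,
          (univ.filter fun m : Fin n => ((Tb m).1, ι'' m) = (r, j)) = ∅ := by
        intro ι''
        rw [Finset.filter_eq_empty_iff]
        intro m _
        simp only [Prod.ext_iff]
        rintro ⟨h1, -⟩
        exact hr (h1 ▸ hT m)
      rw [hempty ι, hempty ι']
  obtain ⟨ρ, hρ⟩ := exists_perm_comp_eq (fun m => ((Tb m).1, ι m))
    (fun m => ((Tb m).1, ι' m)) hfib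
  refine ⟨ρ, ?_, ?_⟩
  · simp only [rowStab, Finset.mem_filter, Finset.mem_univ, true_and]
    intro m
    exact (Prod.ext_iff.mp (hρ m)).1
  · funext m
    exact (Prod.ext_iff.mp (hρ m)).2

/-- Injectivity of partitions from their part functions. -/
lemma partition_injOn_partFn {p q : Nat.Partition n} (hp : numParts p ≤ d)
    (hq : numParts q ≤ d) (h : ∀ i : Fin d, partFn p (i : ℕ) = partFn q (i : ℕ)) :
    p = q := by
  have hall : ∀ i : ℕ, partFn p i = partFn q i := by
    intro i
    by_cases hi : i < d
    · exact h ⟨i, hi⟩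
    · rw [partFn_zero p (hp.trans (Nat.le_of_not_lt hi)),
        partFn_zero q (hq.trans (Nat.le_of_not_lt hi))]
  have hlen : numParts p = numParts q := by
    by_contra hne
    rcases Nat.lt_or_ge (numParts p) (numParts q) with hlt | hge
    · have h1 := partFn_zero p (le_refl (numParts p))
      have h2 := partFn_pos q hlt
      rw [hall (numParts p)] at h1
      omega
    · have hlt : numParts q < numParts p := by omega
      have h1 := partFn_zero q (le_refl (numParts q))
      have h2 := partFn_pos p hlt
      rw [← hall (numParts q)] at h1
      omega
  have hlist : (p.parts.sort (· ≤ ·)).reverse = (q.parts.sort (· ≤ ·)).reverse := by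
    apply List.ext_getElem
    · rw [length_partList, length_partList, hlen]
    · intro i h1 h2
      have e1 := (List.getD_eq_getElem ((p.parts.sort (· ≤ ·)).reverse) 0 h1).symm
      have e2 := (List.getD_eq_getElem ((q.parts.sort (· ≤ ·)).reverse) 0 h2).symm
      rw [e1, e2]
      exact hall i
  have hparts : p.parts = q.parts := by
    have h1 : ((((p.parts.sort (· ≤ ·)).reverse) : List ℕ) : Multiset ℕ) = p.parts := by
      rw [Multiset.coe_reverse, Multiset.sort_eq]
    have h2 : ((((q.parts.sort (· ≤ ·)).reverse) : List ℕ) : Multiset ℕ) = q.parts := by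
      rw [Multiset.coe_reverse, Multiset.sort_eq]
    rw [← h1, ← h2, hlist]
  exact Nat.Partition.ext hparts

lemma card_partitions_le (n d : ℕ) :
    ((Finset.univ : Finset (Nat.Partition n)).filter fun p => numParts p ≤ d).card ≤
      (n + 1) ^ d := by
  classical
  have := Finset.card_le_card_of_injOn
    (s := (Finset.univ : Finset (Nat.Partition n)).filter fun p => numParts p ≤ d)
    (t := (Finset.univ : Finset (Fin d → Fin (n+1))))
    (fun p : Nat.Partition n => fun i : Fin d => (⟨partFn p (i : ℕ), Nat.lt_succ_of_le (partFn_le p _)⟩ : Fin (n+1)))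
    (fun p _ => Finset.mem_univ _)
    ?_
  · calc ((Finset.univ : Finset (Nat.Partition n)).filter fun p => numParts p ≤ d).card
        ≤ (Finset.univ : Finset (Fin d → Fin (n+1))).card := this
      _ = (n + 1) ^ d := by
        rw [Finset.card_univ, Fintype.card_fun]
        simp
  · intro p hp q hq he
    rw [Finset.mem_coe, Finset.mem_filter] at hp hq
    refine partition_injOn_partFn hp.2 hq.2 fun i => ?_
    have := congrFun he i
    rw [Fin.ext_iff] at this
    exact this

end Counting

end PIExp
namespace PIExp
set_option linter.unusedSectionVars false

section Bound

open Finset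

variable {F : Type} [Field F] {H : Type} [Semiring H]
variable {A : Type} [NonUnitalNonAssocRing A] [Module F A]
  [SMulCommClass F A A] [IsScalarTower F A A] [Module H A] [SMulCommClass F H A]

variable (F A) in
/-- Row-invariant functions on colorings. -/
def KSub (n d : ℕ) (Tb : Fin n → ℕ × ℕ) : Submodule F ((Fin n → Fin d) → A) where
  carrier := {κ | ∀ ρ ∈ rowStab Tb, ∀ ι : Fin n → Fin d, κ (fun m => ι (ρ m)) = κ ι}
  add_mem' := by
    intro κ κ' hκ hκ' ρ hρ ι
    simp only [Pi.add_apply, hκ ρ hρ ι, hκ' ρ hρ ι]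
  zero_mem' := by intro ρ hρ ι; rfl
  smul_mem' := by
    intro c κ hκ ρ hρ ι
    simp only [Pi.smul_apply, hκ ρ hρ ι]

variable [FiniteDimensional F A]

lemma finrank_KSub_le (n d : ℕ) (Tb : Fin n → ℕ × ℕ) (hT : ∀ m : Fin n, (Tb m).1 < d) :
    Module.finrank F (KSub F A n d Tb) ≤ (n + 1) ^ (d * d) * Module.finrank F A := by
  classical
  set Θ : ((Fin n → Fin d) → A) →ₗ[F] ((Fin d × Fin d → Fin (n + 1)) → A) :=
    { toFun := fun κ c => if h : ∃ ι : Fin n → Fin d, cntF Tb ι = c then κ h.choose else 0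
      map_add' := by
        intro κ κ'; funext c
        by_cases h : ∃ ι : Fin n → Fin d, cntF Tb ι = c <;> simp [h]
      map_smul' := by
        intro a κ; funext c
        by_cases h : ∃ ι : Fin n → Fin d, cntF Tb ι = c <;> simp [h] } with hΘ
  have hinj : ∀ κ ∈ KSub F A n d Tb, Θ κ = 0 → κ = 0 := by
    intro κ hκ h0
    funext ι
    have hex : ∃ ι' : Fin n → Fin d, cntF Tb ι' = cntF Tb ι := ⟨ι, rfl⟩
    have h1 : Θ κ (cntF Tb ι) = κ hex.choose := dif_pos hex
    obtain ⟨ρ, hρ, hcomp⟩ := exists_rowPerm Tb hT hex.choose ι hex.choose_spec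
    calc κ ι = κ (fun m => hex.choose (ρ m)) := by rw [hcomp]
      _ = κ hex.choose := hκ ρ hρ hex.choose
      _ = Θ κ (cntF Tb ι) := h1.symm
      _ = 0 := by rw [h0]; rfl
  have hker : LinearMap.ker (Θ ∘ₗ (KSub F A n d Tb).subtype) = ⊥ := by
    rw [Submodule.eq_bot_iff]
    rintro ⟨κ, hκ⟩ hk
    rw [LinearMap.mem_ker, LinearMap.comp_apply, Submodule.subtype_apply] at hk
    exact Subtype.ext (hinj κ hκ hk)
  have e1 := LinearMap.quotKerEquivRange (Θ ∘ₗ (KSub F A n d Tb).subtype)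
  have e2 := Submodule.quotEquivOfEqBot _ hker
  have hfr : Module.finrank F (KSub F A n d Tb) =
      Module.finrank F (LinearMap.range (Θ ∘ₗ (KSub F A n d Tb).subtype)) := by
    rw [← LinearEquiv.finrank_eq e1, LinearEquiv.finrank_eq e2]
  rw [hfr]
  calc Module.finrank F (LinearMap.range (Θ ∘ₗ (KSub F A n d Tb).subtype))
      ≤ Module.finrank F ((Fin d × Fin d → Fin (n + 1)) → A) := Submodule.finrank_le _
    _ = (n + 1) ^ (d * d) * Module.finrank F A := by
        rw [Module.finrank_pi_fintype, Finset.sum_const, Finset.card_univ, smul_eq_mul,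
          Fintype.card_fun]
        congr 1
        simp [Fintype.card_prod]

variable (F H A) in
/-- Restriction to tuples of basis vectors. -/
def Rmap (n d : ℕ) (bas : Module.Basis (Fin d) F A) :
    ((Fin n → A) → A) →ₗ[F] ((Fin n → Fin d) → A) where
  toFun G := fun ι => G (fun i => bas (ι i))
  map_add' _ _ := rfl
  map_smul' _ _ := rfl

lemma Ev_youngE_rowInv {n : ℕ} (Tb : Fin n → ℕ × ℕ) (f : FreeNA F H)
    (ρ : Equiv.Perm (Fin n)) (hρ : ρ ∈ rowStab Tb) (v : Fin n → A) :
    Ev F H A n (youngE F H Tb f) (fun i => v (ρ i)) = Ev F H A n (youngE F H Tb f) v := by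
  rw [Ev_youngE, Ev_youngE]
  refine Finset.sum_nbij' (fun π => ρ * π) (fun π => ρ⁻¹ * π)
    (fun π hπ => rowStab_mul hρ hπ) (fun π hπ => rowStab_mul (rowStab_inv hρ) hπ)
    (fun π _ => by group) (fun π _ => by group) (fun π hπ => ?_)
  refine Finset.sum_congr rfl fun σ _ => ?_
  congr 1

lemma mult_eq_zero_of_lt_parts {n : ℕ} (p : Nat.Partition n)
    (hk : Module.finrank F A < numParts p) :
    mult F H (IdH F A H) p = 0 := by
  classical
  set d := Module.finrank F A with hd
  set bas := Module.finBasis F A with hbas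
  set Tb := canonT p with hTb
  have hS : (Wn F H n).map (youngE F H Tb) ≤ Wn F H n := youngE_Wn_le Tb
  rw [mult, finrank_map_mkQ_eq (A := A) _ hS]
  have hbot : ((Wn F H n).map (youngE F H Tb)).map (Ev F H A n) = ⊥ := by
    rw [Submodule.eq_bot_iff]
    rintro _ ⟨x, hx, rfl⟩
    obtain ⟨f, hf, rfl⟩ := hx
    funext v
    rw [Ev_youngE]
    refine Finset.sum_eq_zero fun π _ => ?_
    have hcard : d < (Finset.univ.filter fun m : Fin n => (Tb m).2 = 0).card :=
      lt_of_lt_of_le hk (numParts_le_colCard p)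
    exact alt_sum_eq_zero bas Tb hcard (Ev F H A n f) (Wn_le_comap_MSub n hf)
      (fun i => v (π i))
  rw [hbot]
  exact finrank_bot F _

lemma mult_le_of_parts_le {n : ℕ} (p : Nat.Partition n)
    (hk : numParts p ≤ Module.finrank F A) :
    mult F H (IdH F A H) p ≤
      (n + 1) ^ (Module.finrank F A * Module.finrank F A) * Module.finrank F A := by
  classical
  set d := Module.finrank F A with hd
  set bas := Module.finBasis F A with hbas
  set Tb := canonT p with hTb
  set S' := (Wn F H n).map (youngE F H Tb) with hS'
  have hS : S' ≤ Wn F H n := youngE_Wn_le Tb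
  rw [mult, finrank_map_mkQ_eq (A := A) _ hS]
  set T' := S'.map (Ev F H A n) with hT'
  have hTM : T' ≤ MSub F A n := by
    rintro _ ⟨x, hx, rfl⟩
    exact Wn_le_comap_MSub n (hS hx)
  -- injectivity of Rmap on T'
  have hker : LinearMap.ker ((Rmap F A n d bas) ∘ₗ T'.subtype) = ⊥ := by
    rw [Submodule.eq_bot_iff]
    rintro ⟨G, hG⟩ hkG
    rw [LinearMap.mem_ker, LinearMap.comp_apply, Submodule.subtype_apply] at hkG
    refine Subtype.ext (zero_on_basis bas G (hTM hG) fun ι => ?_)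
    exact congrFun hkG ι
  have e1 := LinearMap.quotKerEquivRange ((Rmap F A n d bas) ∘ₗ T'.subtype)
  have e2 := Submodule.quotEquivOfEqBot _ hker
  have hfr : Module.finrank F T' =
      Module.finrank F (LinearMap.range ((Rmap F A n d bas) ∘ₗ T'.subtype)) := by
    rw [← LinearEquiv.finrank_eq e1, LinearEquiv.finrank_eq e2]
  have hrange : LinearMap.range ((Rmap F A n d bas) ∘ₗ T'.subtype) =
      T'.map (Rmap F A n d bas) := by
    rw [LinearMap.range_comp, Submodule.range_subtype]
  have hsub : T'.map (Rmap F A n d bas) ≤ KSub F A n d Tb := by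
    rintro _ ⟨G, hG, rfl⟩
    obtain ⟨x, hx, rfl⟩ := hG
    obtain ⟨f, hf, rfl⟩ := hx
    intro ρ hρ ι
    show Ev F H A n (youngE F H Tb f) (fun m => bas (ι (ρ m))) =
      Ev F H A n (youngE F H Tb f) (fun m => bas (ι m))
    exact Ev_youngE_rowInv Tb f ρ hρ (fun m => bas (ι m))
  have hT : ∀ m : Fin n, (Tb m).1 < d :=
    fun m => lt_of_lt_of_le (canonT_row_lt p m) hk
  calc Module.finrank F T'
      = Module.finrank F (T'.map (Rmap F A n d bas)) := by rw [hfr, hrange]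
    _ ≤ Module.finrank F (KSub F A n d Tb) := Submodule.finrank_mono hsub
    _ ≤ (n + 1) ^ (d * d) * d := finrank_KSub_le n d Tb hT
end Bound

end PIExp

/-- **Theorem (polynomial upper bound for H-colengths).**
If `A` is a finite-dimensional algebra with a generalized `H`-action over a field of
characteristic `0`, then `ℓ_n^H(A) ≤ (dim A)(n+1)^{(dim A)² + dim A}` for all `n`. -/
theorem H_colength_polynomial_bound
    (F H A : Type) [Field F] [CharZero F] [Ring H] [Algebra F H]
    [NonUnitalNonAssocRing A] [Module F A] [SMulCommClass F A A] [IsScalarTower F A A]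
    [Module H A] [IsScalarTower F H A] [SMulCommClass F H A] [FiniteDimensional F A]
    (hact : PIExp.IsGenAction H A) (n : ℕ) :
    PIExp.colength F H (PIExp.IdH F A H) n ≤
      Module.finrank F A * (n + 1) ^ (Module.finrank F A ^ 2 + Module.finrank F A) := by
  classical
  set d := Module.finrank F A with hd
  have key : ∀ p : Nat.Partition n, PIExp.mult F H (PIExp.IdH F A H) p ≤
      if PIExp.numParts p ≤ d then (n + 1) ^ (d * d) * d else 0 := by
    intro p
    by_cases hp : PIExp.numParts p ≤ d
    · rw [if_pos hp]
      exact PIExp.mult_le_of_parts_le p hp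
    · rw [if_neg hp, PIExp.mult_eq_zero_of_lt_parts p (by omega)]
  calc PIExp.colength F H (PIExp.IdH F A H) n
      = ∑ p : Nat.Partition n, PIExp.mult F H (PIExp.IdH F A H) p := rfl
    _ ≤ ∑ p : Nat.Partition n, if PIExp.numParts p ≤ d then (n + 1) ^ (d * d) * d else 0 :=
        Finset.sum_le_sum fun p _ => key p
    _ = ∑ p ∈ Finset.univ.filter (fun p : Nat.Partition n => PIExp.numParts p ≤ d),
          (n + 1) ^ (d * d) * d := (Finset.sum_filter _ _).symm
    _ = (Finset.univ.filter (fun p : Nat.Partition n => PIExp.numParts p ≤ d)).card *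
          ((n + 1) ^ (d * d) * d) := by rw [Finset.sum_const, smul_eq_mul]
    _ ≤ (n + 1) ^ d * ((n + 1) ^ (d * d) * d) :=
        Nat.mul_le_mul_right _ (PIExp.card_partitions_le n d)
    _ = d * (n + 1) ^ (d ^ 2 + d) := by
        rw [pow_add, pow_two]
        ring
end
end

section
/- Let A be a T-graded algebra over a field F where T is a finite set. Then for all n ∈ ℕ the graded codimension is bounded by c_n^{T-gr}(A) ≤ |T|^n · c_n(A). -/
open Filter Finset Submodule

noncomputable section

namespace PIExp
namespace Aux

open FreeNonUnitalNonAssocAlgebra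

variable (F : Type) [Field F] (T : Type)

open Classical in
/-- Select the component of multidegree `t` and forget the grades. -/
noncomputable def sel (n : ℕ) (t : Fin n → T) : FreeNA F T →ₙₐ[F] FreeNA F Unit :=
  FreeNonUnitalNonAssocAlgebra.lift F (fun p : ℕ × T =>
    if h : p.1 < n then
      (if p.2 = t ⟨p.1, h⟩ then FreeNonUnitalNonAssocAlgebra.of F (p.1, ()) else 0)
    else 0)

/-- The symbols of the leaves of `w` all match the multidegree `t`. -/
def Matches (n : ℕ) (t : Fin n → T) (w : FreeMagma (ℕ × T)) : Prop :=
  ∀ p ∈ mleaves w, ∃ h : p.1 < n, p.2 = t ⟨p.1, h⟩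

variable {T}

lemma mleaves_of {α : Type} (a : α) : mleaves (FreeMagma.of a) = {a} := rfl

lemma embedMonomial_of (S : Type) (a : ℕ × S) :
    embedMonomial F S (FreeMagma.of a) = FreeNonUnitalNonAssocAlgebra.of F a := rfl

lemma mleaves_mul {α : Type} (x y : FreeMagma α) : mleaves (x * y) = mleaves x + mleaves y := rfl

lemma mleaves_map {α β : Type} (f : α → β) (w : FreeMagma α) :
    mleaves (FreeMagma.map f w) = (mleaves w).map f := by
  induction w using FreeMagma.recOnMul with
  | ih1 a => rfl
  | ih2 x y ihx ihy =>
      rw [map_mul, mleaves_mul, mleaves_mul, ihx, ihy, Multiset.map_add]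

lemma matches_left {n : ℕ} {t : Fin n → T} {x y : FreeMagma (ℕ × T)}
    (h : Matches T n t (x * y)) : Matches T n t x :=
  fun p hp => h p (by rw [mleaves_mul]; exact Multiset.mem_add.2 (Or.inl hp))

lemma matches_right {n : ℕ} {t : Fin n → T} {x y : FreeMagma (ℕ × T)}
    (h : Matches T n t (x * y)) : Matches T n t y :=
  fun p hp => h p (by rw [mleaves_mul]; exact Multiset.mem_add.2 (Or.inr hp))

lemma sel_emb_of_matches {n : ℕ} {t : Fin n → T} {w : FreeMagma (ℕ × T)}
    (h : Matches T n t w) :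
    sel F T n t (embedMonomial F T w) =
      embedMonomial F Unit (FreeMagma.map (fun p : ℕ × T => (p.1, ())) w) := by
  induction w using FreeMagma.recOnMul with
  | ih1 p =>
      obtain ⟨hlt, heq⟩ := h p (by rw [mleaves_of]; exact Multiset.mem_singleton_self p)
      show sel F T n t (FreeMagma.lift (of F) (FreeMagma.of p)) = _
      rw [FreeMagma.lift_of, FreeMagma.map_of, sel, lift_of_apply]
      rw [dif_pos hlt, if_pos heq]
      rfl
  | ih2 x y ihx ihy =>
      rw [map_mul, map_mul, map_mul, ihx (matches_left h), ihy (matches_right h), map_mul]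

lemma sel_emb_of_not {n : ℕ} {t : Fin n → T} {w : FreeMagma (ℕ × T)}
    (h : ¬ Matches T n t w) :
    sel F T n t (embedMonomial F T w) = 0 := by
  induction w using FreeMagma.recOnMul with
  | ih1 p =>
      show sel F T n t (FreeMagma.lift (of F) (FreeMagma.of p)) = 0
      rw [FreeMagma.lift_of, sel, lift_of_apply]
      by_cases hlt : p.1 < n
      · rw [dif_pos hlt, if_neg]
        intro heq
        exact h (fun q hq => by
          rw [mleaves_of, Multiset.mem_singleton] at hq
          exact ⟨hq ▸ hlt, hq ▸ heq⟩)
      · rw [dif_neg hlt]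
  | ih2 x y ihx ihy =>
      rw [map_mul, map_mul]
      by_cases hx : Matches T n t x
      · have hy : ¬ Matches T n t y := by
          intro hy
          exact h (fun p hp => by
            rw [mleaves_mul, Multiset.mem_add] at hp
            exact hp.elim (hx p) (hy p))
        rw [ihy hy, mul_zero]
      · rw [ihx hx, zero_mul]

variable {A : Type} [NonUnitalNonAssocSemiring A] [Module F A]
  [SMulCommClass F A A] [IsScalarTower F A A]

lemma lift_sel_emb (n : ℕ) (t : Fin n → T) (ψ : ℕ × T → A) {w : FreeMagma (ℕ × T)}
    (h : Matches T n t w) :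
    (FreeNonUnitalNonAssocAlgebra.lift F
        (fun p : ℕ × Unit => if hh : p.1 < n then ψ (p.1, t ⟨p.1, hh⟩) else 0) :
      FreeNA F Unit →ₙₐ[F] A)
      (embedMonomial F Unit (FreeMagma.map (fun p : ℕ × T => (p.1, ())) w)) =
    (FreeNonUnitalNonAssocAlgebra.lift F ψ : FreeNA F T →ₙₐ[F] A)
      (embedMonomial F T w) := by
  induction w using FreeMagma.recOnMul with
  | ih1 p =>
      obtain ⟨hlt, heq⟩ := h p (by rw [mleaves_of]; exact Multiset.mem_singleton_self p)
      rw [FreeMagma.map_of, embedMonomial_of, embedMonomial_of,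
        lift_of_apply, lift_of_apply, dif_pos hlt, ← heq]
  | ih2 x y ihx ihy =>
      rw [map_mul, map_mul, map_mul, map_mul, map_mul,
        ihx (matches_left h), ihy (matches_right h)]

lemma exists_unique_t {n : ℕ} {w : FreeMagma (ℕ × T)}
    (hw : (mleaves w).map Prod.fst = Multiset.range n) :
    ∃! t : Fin n → T, Matches T n t w := by
  have hnd : ((mleaves w).map Prod.fst).Nodup := by rw [hw]; exact Multiset.nodup_range n
  have hinj : ∀ p ∈ mleaves w, ∀ q ∈ mleaves w, p.1 = q.1 → p = q :=
    Multiset.inj_on_of_nodup_map hnd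
  have hmem : ∀ i : Fin n, ∃ p, p ∈ mleaves w ∧ p.1 = (i : ℕ) := by
    intro i
    have hi : (i : ℕ) ∈ (mleaves w).map Prod.fst := by
      rw [hw, Multiset.mem_range]; exact i.2
    obtain ⟨p, hp, hp1⟩ := Multiset.mem_map.1 hi
    exact ⟨p, hp, hp1⟩
  choose p hp hp1 using hmem
  refine ⟨fun i => (p i).2, ?_, ?_⟩
  · intro q hq
    have hlt : q.1 < n := by
      have : q.1 ∈ Multiset.range n := by
        rw [← hw]; exact Multiset.mem_map_of_mem _ hq
      exact Multiset.mem_range.1 this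
    refine ⟨hlt, ?_⟩
    have hqe : p ⟨q.1, hlt⟩ = q :=
      hinj _ (hp ⟨q.1, hlt⟩) _ hq (hp1 ⟨q.1, hlt⟩)
    show q.2 = (p ⟨q.1, hlt⟩).2
    rw [hqe]
  · intro t ht
    funext i
    obtain ⟨hlt, heq⟩ := ht (p i) (hp i)
    have hfin : (⟨(p i).1, hlt⟩ : Fin n) = i := Fin.ext (hp1 i)
    show t i = (p i).2
    rw [hfin] at heq
    exact heq.symm

lemma eval_eq_sum [Fintype T] (n : ℕ) (ψ : ℕ × T → A) {f : FreeNA F T}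
    (hf : f ∈ Wn F T n) :
    (FreeNonUnitalNonAssocAlgebra.lift F ψ : FreeNA F T →ₙₐ[F] A) f =
      ∑ t : Fin n → T,
        (FreeNonUnitalNonAssocAlgebra.lift F
            (fun p : ℕ × Unit => if hh : p.1 < n then ψ (p.1, t ⟨p.1, hh⟩) else 0) :
          FreeNA F Unit →ₙₐ[F] A) (sel F T n t f) := by
  induction hf using Submodule.span_induction with
  | mem x hx =>
      obtain ⟨w, hw, rfl⟩ := hx
      obtain ⟨t₀, ht₀, huniq⟩ := exists_unique_t hw
      rw [Finset.sum_eq_single t₀]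
      · rw [sel_emb_of_matches F ht₀, lift_sel_emb F n t₀ ψ ht₀]
      · intro t _ hne
        rw [sel_emb_of_not F (fun hm => hne (huniq t hm)), map_zero]
      · intro habs; exact absurd (Finset.mem_univ t₀) habs
  | zero => simp
  | add x y _ _ ihx ihy =>
      rw [map_add, ihx, ihy, ← Finset.sum_add_distrib]
      exact Finset.sum_congr rfl fun t _ => by rw [map_add, map_add]
  | smul c x _ ih =>
      rw [map_smul, ih, Finset.smul_sum]
      exact Finset.sum_congr rfl fun t _ => by rw [map_smul, map_smul]

lemma sel_mem_Wn (n : ℕ) (t : Fin n → T) {f : FreeNA F T} (hf : f ∈ Wn F T n) :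
    sel F T n t f ∈ Wn F Unit n := by
  induction hf using Submodule.span_induction with
  | mem x hx =>
      obtain ⟨w, hw, rfl⟩ := hx
      by_cases hm : Matches T n t w
      · rw [sel_emb_of_matches F hm]
        refine Submodule.subset_span ⟨FreeMagma.map (fun p : ℕ × T => (p.1, ())) w, ?_, rfl⟩
        rw [mleaves_map, Multiset.map_map]
        exact hw
      · rw [sel_emb_of_not F hm]; exact zero_mem _
  | zero => rw [map_zero]; exact zero_mem _
  | add x y _ _ ihx ihy => rw [map_add]; exact add_mem ihx ihy
  | smul c x _ ih => rw [map_smul]; exact smul_mem _ c ih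

lemma mem_IdGr [Fintype T] (comp : T → Submodule F A) (n : ℕ) {f : FreeNA F T}
    (hf : f ∈ Wn F T n) (h : ∀ t : Fin n → T, sel F T n t f ∈ IdOrd F A) :
    f ∈ IdGr F A T comp := by
  rw [IdGr, Submodule.mem_iInf]
  intro ψ
  rw [LinearMap.mem_ker]
  have key := eval_eq_sum F n (fun p : ℕ × T => ψ.1 p) hf
  refine key.trans ?_
  refine Finset.sum_eq_zero fun t _ => ?_
  have ht := h t
  rw [IdOrd, Submodule.mem_iInf] at ht
  have := ht (fun i : ℕ => if hh : i < n then ψ.1 (i, t ⟨i, hh⟩) else 0)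
  rw [LinearMap.mem_ker] at this
  exact this

end Aux
end PIExp

/-- **Proposition (second part): `c_n^{T-gr}(A) ≤ |T|^n c_n(A)`**
for any algebra `A` over a field `F` graded by a finite set `T`. -/
theorem graded_codim_le_card_pow_mul_codim
    (F T A : Type) [Field F] [Finite T]
    [NonUnitalNonAssocRing A] [Module F A] [SMulCommClass F A A] [IsScalarTower F A A]
    (comp : T → Submodule F A) (hgr : PIExp.IsGrading F T A comp) (n : ℕ) :
    PIExp.codimRank F T (PIExp.IdGr F A T comp) n ≤
      (Nat.card T : Cardinal) ^ n * PIExp.codimRank F Unit (PIExp.IdOrd F A) n := by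
  classical
  cases nonempty_fintype T
  set I := PIExp.IdGr F A T comp with hI
  set J := PIExp.IdOrd F A with hJ
  set W := PIExp.Wn F T n with hW
  set W' := (PIExp.Wn F Unit n).map J.mkQ with hW'
  -- the two linear maps out of W
  let L1 : W →ₗ[F] (PIExp.FreeNA F T ⧸ I) := I.mkQ.comp W.subtype
  let L2 : W →ₗ[F] ((Fin n → T) → W') :=
    { toFun := fun x t =>
        ⟨J.mkQ (PIExp.Aux.sel F T n t x.1),
          Submodule.mem_map_of_mem (PIExp.Aux.sel_mem_Wn F n t x.2)⟩
      map_add' := by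
        intro x y; funext t; apply Subtype.ext
        show J.mkQ (PIExp.Aux.sel F T n t (x.1 + y.1)) = _
        rw [map_add, map_add]; rfl
      map_smul' := by
        intro c x; funext t; apply Subtype.ext
        show J.mkQ (PIExp.Aux.sel F T n t (c • x.1)) = _
        rw [map_smul, map_smul]; rfl }
  have hker : LinearMap.ker L2 ≤ LinearMap.ker L1 := by
    intro x hx
    rw [LinearMap.mem_ker] at hx ⊢
    have hx' : ∀ t : Fin n → T, PIExp.Aux.sel F T n t x.1 ∈ J := by
      intro t
      have h0 : J.mkQ (PIExp.Aux.sel F T n t x.1) = 0 :=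
        congrArg Subtype.val (congrFun hx t)
      rwa [← LinearMap.mem_ker, Submodule.ker_mkQ] at h0
    have hmem : x.1 ∈ I := PIExp.Aux.mem_IdGr F comp n x.2 hx'
    show I.mkQ x.1 = 0
    rwa [← LinearMap.mem_ker, Submodule.ker_mkQ]
  -- identify the LHS with the rank of the range of L1
  have hrange : LinearMap.range L1 = W.map I.mkQ := by
    rw [LinearMap.range_comp, Submodule.range_subtype]
  have hL1 : PIExp.codimRank F T I n = Module.rank F (LinearMap.range L1) := by
    rw [hrange]; rfl
  -- rank chase
  have e1 : Module.rank F (LinearMap.range L1) = Module.rank F (W ⧸ LinearMap.ker L1) :=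
    (LinearMap.quotKerEquivRange L1).rank_eq.symm
  have hsurj : Function.Surjective
      (Submodule.mapQ (LinearMap.ker L2) (LinearMap.ker L1) LinearMap.id hker) := by
    intro y
    obtain ⟨x, rfl⟩ := Submodule.mkQ_surjective (LinearMap.ker L1) y
    exact ⟨(LinearMap.ker L2).mkQ x, by
      rw [Submodule.mkQ_apply, Submodule.mapQ_apply]; rfl⟩
  have e2 : Module.rank F (W ⧸ LinearMap.ker L1) ≤ Module.rank F (W ⧸ LinearMap.ker L2) :=
    LinearMap.rank_le_of_surjective _ hsurj
  have e3 : Module.rank F (W ⧸ LinearMap.ker L2) = Module.rank F (LinearMap.range L2) :=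
    (LinearMap.quotKerEquivRange L2).rank_eq
  have e4 : Module.rank F (LinearMap.range L2) ≤ Module.rank F ((Fin n → T) → W') :=
    Submodule.rank_le _
  haveI hfree : Module.Free F W' := Module.Free.of_divisionRing F W'
  have e5 : Module.rank F ((Fin n → T) → W') =
      (Fintype.card (Fin n → T) : Cardinal) * Module.rank F W' := rank_fun
  have hcard : (Fintype.card (Fin n → T) : Cardinal) = (Nat.card T : Cardinal) ^ n := by
    rw [Fintype.card_fun, Fintype.card_fin, Nat.card_eq_fintype_card, Nat.cast_pow]
  calc PIExp.codimRank F T I n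
      = Module.rank F (W ⧸ LinearMap.ker L1) := by rw [hL1, e1]
    _ ≤ Module.rank F (W ⧸ LinearMap.ker L2) := e2
    _ ≤ Module.rank F ((Fin n → T) → W') := by rw [e3]; exact e4
    _ = (Nat.card T : Cardinal) ^ n * Module.rank F W' := by rw [e5, hcard]
    _ = (Nat.card T : Cardinal) ^ n * PIExp.codimRank F Unit J n := rfl
end
end

section
/- Let Γ: A = ⊕_{t∈T} A^{(t)} be a grading of an F-algebra A by a set T with finite support, and regard A as an algebra with the generalized F^T-action h·a = h(t)a for a ∈ A^{(t)}. Then the relatively free algebras are isomorphic as F-algebras: F{X^{T-gr}}/Id^{T-gr}(A) ≅ F{X | F^T}/Id^{F^T}(A), via the map induced by x_i^h ↦ Σ_{t ∈ supp Γ} h(t)·x_i^{(t)} with inverse induced by x_i^{(t)} ↦ x_i^{h_t}, where h_t is the indicator function of t. -/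
open Filter Finset Submodule

noncomputable section

/-- Auxiliary decomposition lemma: every element decomposes along the grading, and the
generalized `F^T`-action is computed componentwise. -/
theorem PIExp.exists_decomp_aux
    {F T A : Type} [Field F] [DecidableEq T]
    [NonUnitalNonAssocRing A] [Module F A] [Module (T → F) A]
    (comp : T → Submodule F A)
    (htotal : (⨆ t, comp t) = ⊤)
    (hsupp : {t : T | comp t ≠ ⊥}.Finite)
    (hact : ∀ (h : T → F) (t : T), ∀ a ∈ comp t, h • a = h t • a)
    (a : A) :
    ∃ φ : T →₀ A, (∀ t, φ t ∈ comp t) ∧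
      (∀ h : T → F, h • a = ∑ t ∈ hsupp.toFinset, h t • φ t) ∧
      (∀ t : T, (fun s => if s = t then (1 : F) else 0) • a = φ t) := by
  classical
  have ha : a ∈ ⨆ t, comp t := htotal ▸ Submodule.mem_top
  obtain ⟨φ, hφ, hsum⟩ := (Submodule.mem_iSup_iff_exists_finsupp comp a).mp ha
  have hsub : φ.support ⊆ hsupp.toFinset := by
    intro t ht
    simp only [Set.Finite.mem_toFinset, Set.mem_setOf_eq]
    intro hbot
    exact Finsupp.mem_support_iff.mp ht (by simpa [hbot] using hφ t)
  have key : ∀ h : T → F, h • a = ∑ t ∈ hsupp.toFinset, h t • φ t := by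
    intro h
    have h1 : h • a = ∑ t ∈ φ.support, h t • φ t := by
      rw [← hsum, Finsupp.sum, Finset.smul_sum]
      exact Finset.sum_congr rfl fun t _ => hact h t (φ t) (hφ t)
    rw [h1]
    refine Finset.sum_subset hsub fun t _ ht => ?_
    rw [Finsupp.notMem_support_iff.mp ht, smul_zero]
  refine ⟨φ, hφ, key, fun t => ?_⟩
  rw [key]
  have h2 : (∑ s ∈ hsupp.toFinset,
      (fun s' => if s' = t then (1 : F) else 0) s • φ s) =
      if t ∈ hsupp.toFinset then φ t else 0 := by
    simp only [ite_smul, one_smul, zero_smul]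
    exact Finset.sum_ite_eq' _ _ _
  rw [h2]
  by_cases hts : t ∈ hsupp.toFinset
  · simp [hts]
  · have hbot : comp t = ⊥ := by
      by_contra hne
      exact hts (by simpa [Set.Finite.mem_toFinset] using hne)
    have : φ t = 0 := by simpa [hbot] using hφ t
    simp [hts, this]

/-- **Lemma (the relatively free algebras coincide).**
For a grading `Γ : A = ⊕_{t∈T} A^{(t)}` with finite support, regarded as a generalized
`F^T`-action, the algebras `F{X^{T-gr}}/Id^{T-gr}(A)` and `F{X|F^T}/Id^{F^T}(A)` are isomorphic
via the mutually inverse maps induced by `ξ : x_i^h ↦ Σ_{t ∈ supp Γ} h(t) x_i^{(t)}` and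
`η : x_i^{(t)} ↦ x_i^{h_t}` (here expressed by: `ξ`, `η` map identities to identities and are
mutually inverse modulo the ideals of identities). -/
theorem relatively_free_algebras_isomorphic
    (F T A : Type) [Field F] [DecidableEq T]
    [NonUnitalNonAssocRing A] [Module F A] [SMulCommClass F A A] [IsScalarTower F A A]
    [Module (T → F) A]
    (comp : T → Submodule F A)
    (hindep : iSupIndep comp) (htotal : (⨆ t, comp t) = ⊤)
    (hmul : ∀ s t : T, ∃ r : T, ∀ a ∈ comp s, ∀ b ∈ comp t, a * b ∈ comp r)
    (hsupp : {t : T | comp t ≠ ⊥}.Finite)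
    (hact : ∀ (h : T → F) (t : T), ∀ a ∈ comp t, h • a = h t • a) :
    ∃ (ξ : PIExp.FreeNA F (T → F) →ₙₐ[F] PIExp.FreeNA F T)
      (η : PIExp.FreeNA F T →ₙₐ[F] PIExp.FreeNA F (T → F)),
      (∀ (i : ℕ) (h : T → F),
        ξ (FreeNonUnitalNonAssocAlgebra.of F (i, h)) =
          ∑ t ∈ hsupp.toFinset, h t • FreeNonUnitalNonAssocAlgebra.of F (i, t)) ∧
      (∀ (i : ℕ) (t : T),
        η (FreeNonUnitalNonAssocAlgebra.of F (i, t)) =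
          FreeNonUnitalNonAssocAlgebra.of F (i, fun s => if s = t then (1 : F) else 0)) ∧
      (∀ f ∈ PIExp.IdH F A (T → F), ξ f ∈ PIExp.IdGr F A T comp) ∧
      (∀ g ∈ PIExp.IdGr F A T comp, η g ∈ PIExp.IdH F A (T → F)) ∧
      (∀ f, η (ξ f) - f ∈ PIExp.IdH F A (T → F)) ∧
      (∀ g, ξ (η g) - g ∈ PIExp.IdGr F A T comp) := by
  classical
  set ξ : PIExp.FreeNA F (T → F) →ₙₐ[F] PIExp.FreeNA F T :=
    FreeNonUnitalNonAssocAlgebra.lift F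
      (fun p : ℕ × (T → F) =>
        ∑ t ∈ hsupp.toFinset, p.2 t • FreeNonUnitalNonAssocAlgebra.of F (p.1, t)) with hξdef
  set η : PIExp.FreeNA F T →ₙₐ[F] PIExp.FreeNA F (T → F) :=
    FreeNonUnitalNonAssocAlgebra.lift F
      (fun p : ℕ × T =>
        FreeNonUnitalNonAssocAlgebra.of F
          (p.1, fun s => if s = p.2 then (1 : F) else 0)) with hηdef
  have hξof : ∀ (i : ℕ) (h : T → F),
      ξ (FreeNonUnitalNonAssocAlgebra.of F (i, h)) =
        ∑ t ∈ hsupp.toFinset, h t • FreeNonUnitalNonAssocAlgebra.of F (i, t) := by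
    intro i h
    rw [hξdef, FreeNonUnitalNonAssocAlgebra.lift_of_apply]
  have hηof : ∀ (i : ℕ) (t : T),
      η (FreeNonUnitalNonAssocAlgebra.of F (i, t)) =
        FreeNonUnitalNonAssocAlgebra.of F (i, fun s => if s = t then (1 : F) else 0) := by
    intro i t
    rw [hηdef, FreeNonUnitalNonAssocAlgebra.lift_of_apply]
  refine ⟨ξ, η, hξof, hηof, ?_, ?_, ?_, ?_⟩
  · -- ξ maps IdH to IdGr
    intro f hf
    rw [PIExp.IdGr, Submodule.mem_iInf]
    intro ψ
    rw [LinearMap.mem_ker]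
    set ψ' : ℕ → A := fun i => ∑ t ∈ hsupp.toFinset, ψ.1 (i, t) with hψ'
    have hcomp :
        (FreeNonUnitalNonAssocAlgebra.lift F (fun p : ℕ × T => ψ.1 p) :
          PIExp.FreeNA F T →ₙₐ[F] A).comp ξ =
        FreeNonUnitalNonAssocAlgebra.lift F
          (fun p : ℕ × (T → F) => p.2 • ψ' p.1) := by
      apply FreeNonUnitalNonAssocAlgebra.hom_ext
      rintro ⟨i, h⟩
      rw [NonUnitalAlgHom.comp_apply, hξof, map_sum,
        FreeNonUnitalNonAssocAlgebra.lift_of_apply]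
      have hr : h • ψ' i = ∑ t ∈ hsupp.toFinset, h t • ψ.1 (i, t) := by
        rw [hψ', Finset.smul_sum]
        exact Finset.sum_congr rfl fun t _ => hact h t _ (ψ.2 (i, t))
      rw [hr]
      exact Finset.sum_congr rfl fun t _ => by
        rw [map_smul, FreeNonUnitalNonAssocAlgebra.lift_of_apply]
    have := congrArg (fun E : PIExp.FreeNA F (T → F) →ₙₐ[F] A => E f) hcomp
    simp only [NonUnitalAlgHom.comp_apply] at this
    refine this.trans ?_
    have hf' := (Submodule.mem_iInf _).mp hf ψ'
    exact LinearMap.mem_ker.mp hf'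
  · -- η maps IdGr to IdH
    intro g hg
    rw [PIExp.IdH, Submodule.mem_iInf]
    intro ψ
    rw [LinearMap.mem_ker]
    choose φ hφmem hφsum hφind using fun i =>
      PIExp.exists_decomp_aux comp htotal hsupp hact (ψ i)
    set ψ' : {ψ : ℕ × T → A // ∀ p, ψ p ∈ comp p.2} :=
      ⟨fun p => φ p.1 p.2, fun p => hφmem p.1 p.2⟩ with hψ'
    have hcomp :
        (FreeNonUnitalNonAssocAlgebra.lift F (fun p : ℕ × (T → F) => p.2 • ψ p.1) :
          PIExp.FreeNA F (T → F) →ₙₐ[F] A).comp η =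
        FreeNonUnitalNonAssocAlgebra.lift F (fun p : ℕ × T => ψ'.1 p) := by
      apply FreeNonUnitalNonAssocAlgebra.hom_ext
      rintro ⟨i, t⟩
      rw [NonUnitalAlgHom.comp_apply, hηof, FreeNonUnitalNonAssocAlgebra.lift_of_apply,
        FreeNonUnitalNonAssocAlgebra.lift_of_apply]
      exact hφind i t
    have := congrArg (fun E : PIExp.FreeNA F T →ₙₐ[F] A => E g) hcomp
    simp only [NonUnitalAlgHom.comp_apply] at this
    refine this.trans ?_
    have hg' := (Submodule.mem_iInf _).mp hg ψ'
    exact LinearMap.mem_ker.mp hg'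
  · -- η ∘ ξ is the identity modulo IdH
    intro f
    rw [PIExp.IdH, Submodule.mem_iInf]
    intro ψ
    rw [LinearMap.mem_ker, map_sub, sub_eq_zero]
    choose φ hφmem hφsum hφind using fun i =>
      PIExp.exists_decomp_aux comp htotal hsupp hact (ψ i)
    set E : PIExp.FreeNA F (T → F) →ₙₐ[F] A :=
      FreeNonUnitalNonAssocAlgebra.lift F (fun p : ℕ × (T → F) => p.2 • ψ p.1) with hE
    have hcomp : (E.comp η).comp ξ = E := by
      apply FreeNonUnitalNonAssocAlgebra.hom_ext
      rintro ⟨i, h⟩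
      rw [NonUnitalAlgHom.comp_apply, NonUnitalAlgHom.comp_apply, hξof, map_sum, map_sum]
      have hterm : ∀ t ∈ hsupp.toFinset,
          E (η (h t • FreeNonUnitalNonAssocAlgebra.of F (i, t))) = h t • φ i t := by
        intro t _
        rw [map_smul, map_smul, hηof, hE, FreeNonUnitalNonAssocAlgebra.lift_of_apply,
          hφind i t]
      rw [Finset.sum_congr rfl hterm, hE, FreeNonUnitalNonAssocAlgebra.lift_of_apply,
        hφsum i h]
    have := congrArg (fun G : PIExp.FreeNA F (T → F) →ₙₐ[F] A => G f) hcomp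
    simp only [NonUnitalAlgHom.comp_apply] at this
    exact this
  · -- ξ ∘ η is the identity modulo IdGr
    intro g
    rw [PIExp.IdGr, Submodule.mem_iInf]
    intro ψ
    rw [LinearMap.mem_ker, map_sub, sub_eq_zero]
    set E : PIExp.FreeNA F T →ₙₐ[F] A :=
      FreeNonUnitalNonAssocAlgebra.lift F (fun p : ℕ × T => ψ.1 p) with hE
    have hcomp : (E.comp ξ).comp η = E := by
      apply FreeNonUnitalNonAssocAlgebra.hom_ext
      rintro ⟨i, t⟩
      rw [NonUnitalAlgHom.comp_apply, NonUnitalAlgHom.comp_apply, hηof, hξof, map_sum]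
      have hterm : ∀ s ∈ hsupp.toFinset,
          E ((if s = t then (1 : F) else 0) • FreeNonUnitalNonAssocAlgebra.of F (i, s)) =
            (if s = t then (1 : F) else 0) • ψ.1 (i, s) := by
        intro s _
        rw [map_smul, hE, FreeNonUnitalNonAssocAlgebra.lift_of_apply]
      rw [Finset.sum_congr rfl hterm, hE, FreeNonUnitalNonAssocAlgebra.lift_of_apply]
      have h2 : (∑ s ∈ hsupp.toFinset, (if s = t then (1 : F) else 0) • ψ.1 (i, s)) =
          if t ∈ hsupp.toFinset then ψ.1 (i, t) else 0 := by
        simp only [ite_smul, one_smul, zero_smul]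
        exact Finset.sum_ite_eq' _ _ _
      rw [h2]
      by_cases hts : t ∈ hsupp.toFinset
      · simp [hts]
      · have hbot : comp t = ⊥ := by
          by_contra hne
          exact hts (by simpa [Set.Finite.mem_toFinset] using hne)
        have : ψ.1 (i, t) = 0 := by simpa [hbot] using ψ.2 (i, t)
        simp [hts, this]
    have := congrArg (fun G : PIExp.FreeNA F T →ₙₐ[F] A => G g) hcomp
    simp only [NonUnitalAlgHom.comp_apply] at this
    exact this
end
end

section
/- Let A be a finite-dimensional algebra with a generalized H-action over a field F, with basis a_1, …, a_s, fix k ∈ ℕ, and define ξ_j := Σ_{i=1}^s a_i ⊗ ξ_{ij} in A ⊗ F[ξ_{ij} : 1 ≤ i ≤ s, 1 ≤ j ≤ k] (with generalized H-action h(a ⊗ f) = (ha) ⊗ f). Let R_{kn} be the F-linear span of all products (h_1 ξ_{i_1})⋯(h_n ξ_{i_n}) with h_j ∈ H, 1 ≤ i_j ≤ k, over all bracket arrangements. Then dim R_{kn} ≤ (dim A)·(n+1)^{k · dim A} for all n ∈ ℕ. -/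
open Filter Finset Submodule

noncomputable section

open scoped TensorProduct in
/-- **Lemma (dimension bound for the span of products of generic elements).**
With `ξ_j = Σ_i a_i ⊗ ξ_{ij} ∈ A ⊗ F[ξ_{ij}]`, the span `R_{kn}` of all products
`(h_1 ξ_{i_1}) ⋯ (h_n ξ_{i_n})` (over all bracket arrangements) has dimension at most
`(dim A)(n+1)^{k · dim A}`. -/
theorem generic_products_span_dim_bound
    (F H A : Type) [Field F] [Ring H] [Algebra F H]
    [NonUnitalNonAssocRing A] [Module F A] [SMulCommClass F A A] [IsScalarTower F A A]
    [Module H A] [IsScalarTower F H A] [SMulCommClass F H A]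
    (s : ℕ) (b : Module.Basis (Fin s) F A) (k n : ℕ) :
    Module.finrank F ↥(Submodule.span F
      {x : A ⊗[F] MvPolynomial (Fin s × Fin k) F |
        ∃ w : FreeMagma (H × Fin k),
          Multiset.card (PIExp.mleaves w) = n ∧
          x = FreeMagma.lift (fun q : H × Fin k =>
            q.1 • ∑ i : Fin s, b i ⊗ₜ[F]
              (MvPolynomial.X (i, q.2) : MvPolynomial (Fin s × Fin k) F)) w}) ≤
      s * (n + 1) ^ (k * s) := by
  classical
  set P := MvPolynomial (Fin s × Fin k) F with hP
  -- the submodule of tensors with all monomial exponents bounded by `m`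
  let Mbd : ℕ → Submodule F (A ⊗[F] P) := fun m =>
    Submodule.span F {x | ∃ (a : A) (d : (Fin s × Fin k) →₀ ℕ),
      (∀ v, d v ≤ m) ∧ x = a ⊗ₜ[F] (MvPolynomial.monomial d (1 : F))}
  have hmul : ∀ p q : ℕ, ∀ x y : A ⊗[F] P, x ∈ Mbd p → y ∈ Mbd q →
      x * y ∈ Mbd (p + q) := by
    intro p q x y hx hy
    induction hx using Submodule.span_induction with
    | mem u hu =>
      induction hy using Submodule.span_induction with
      | mem v hv =>
        obtain ⟨a, d, hd, rfl⟩ := hu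
        obtain ⟨a', d', hd', rfl⟩ := hv
        rw [Algebra.TensorProduct.tmul_mul_tmul, MvPolynomial.monomial_mul, mul_one]
        exact Submodule.subset_span
          ⟨a * a', d + d', fun v => add_le_add (hd v) (hd' v), rfl⟩
      | zero => rw [mul_zero]; exact Submodule.zero_mem _
      | add v w _ _ hv hw => rw [mul_add]; exact Submodule.add_mem _ hv hw
      | smul c v _ hv => rw [mul_smul_comm]; exact Submodule.smul_mem _ _ hv
    | zero => rw [zero_mul]; exact Submodule.zero_mem _
    | add u w _ _ hu hw => rw [add_mul]; exact Submodule.add_mem _ hu hw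
    | smul c u _ hu => rw [smul_mul_assoc]; exact Submodule.smul_mem _ _ hu
  set f : H × Fin k → A ⊗[F] P := fun q : H × Fin k =>
    q.1 • ∑ i : Fin s, b i ⊗ₜ[F]
      (MvPolynomial.X (i, q.2) : MvPolynomial (Fin s × Fin k) F) with hf
  have hmain : ∀ w : FreeMagma (H × Fin k),
      (FreeMagma.lift f) w ∈ Mbd (Multiset.card (PIExp.mleaves w)) := by
    intro w
    induction w with
    | ih1 q =>
      have hcard : Multiset.card (PIExp.mleaves (FreeMagma.of q)) = 1 := rfl
      rw [hcard]
      have : (FreeMagma.lift f) (FreeMagma.of q) = f q := rfl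
      rw [this, hf]
      simp only [Finset.smul_sum]
      refine Submodule.sum_mem _ fun i _ => ?_
      rw [TensorProduct.smul_tmul']
      refine Submodule.subset_span ⟨q.1 • b i, Finsupp.single (i, q.2) 1, ?_, ?_⟩
      · intro v
        by_cases h : (i, q.2) = v <;> simp [Finsupp.single_apply, h]
      · rw [MvPolynomial.X, MvPolynomial.monomial]
    | ih2 x y hx hy =>
      rw [map_mul]
      have h := hmul _ _ _ _ hx hy
      have hcard : Multiset.card (PIExp.mleaves (x * y)) =
          Multiset.card (PIExp.mleaves x) + Multiset.card (PIExp.mleaves y) := by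
        show Multiset.card (PIExp.mleaves x + PIExp.mleaves y) = _
        simp
      rw [hcard]
      exact h
  -- the span in question sits inside `Mbd n`
  have hsub : Submodule.span F
      {x : A ⊗[F] MvPolynomial (Fin s × Fin k) F |
        ∃ w : FreeMagma (H × Fin k),
          Multiset.card (PIExp.mleaves w) = n ∧
          x = FreeMagma.lift (fun q : H × Fin k =>
            q.1 • ∑ i : Fin s, b i ⊗ₜ[F]
              (MvPolynomial.X (i, q.2) : MvPolynomial (Fin s × Fin k) F)) w} ≤ Mbd n := by
    rw [Submodule.span_le]
    rintro x ⟨w, hw, rfl⟩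
    have := hmain w
    rwa [hw] at this
  -- `Mbd n` is inside the span of an explicit finite family
  let g : Fin s × (Fin s × Fin k → Fin (n + 1)) → A ⊗[F] P := fun p =>
    b p.1 ⊗ₜ[F] MvPolynomial.monomial
      (Finsupp.equivFunOnFinite.symm fun v => ((p.2 v : ℕ))) (1 : F)
  have h2 : Mbd n ≤ Submodule.span F (Set.range g) := by
    rw [Submodule.span_le]
    rintro x ⟨a, d, hd, rfl⟩
    have key : ∀ i : Fin s,
        b i ⊗ₜ[F] (MvPolynomial.monomial d (1 : F)) ∈ Set.range g := by
      intro i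
      refine ⟨(i, fun v => ⟨d v, Nat.lt_succ_of_le (hd v)⟩), ?_⟩
      show b i ⊗ₜ[F] MvPolynomial.monomial
        (Finsupp.equivFunOnFinite.symm fun v => ((d v : ℕ))) (1 : F) = _
      rw [show (fun v => ((d v : ℕ))) = ⇑d from rfl, Finsupp.equivFunOnFinite_symm_coe]
    have ha : a ⊗ₜ[F] (MvPolynomial.monomial d (1 : F)) =
        ∑ i : Fin s, b.repr a i • (b i ⊗ₜ[F] (MvPolynomial.monomial d (1 : F))) := by
      conv_lhs => rw [← b.sum_repr a]
      rw [TensorProduct.sum_tmul]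
      exact Finset.sum_congr rfl fun i _ => by rw [TensorProduct.smul_tmul']
    rw [ha]
    exact Submodule.sum_mem _ fun i _ =>
      Submodule.smul_mem _ _ (Submodule.subset_span (key i))
  have hfin : Module.Finite F (Submodule.span F (Set.range g)) :=
    Module.Finite.span_of_finite F (Set.finite_range g)
  calc Module.finrank F ↥(Submodule.span F _)
      ≤ Module.finrank F (Submodule.span F (Set.range g)) :=
        Submodule.finrank_mono (le_trans hsub h2)
    _ ≤ Fintype.card (Fin s × (Fin s × Fin k → Fin (n + 1))) := finrank_range_le_card g
    _ = s * (n + 1) ^ (k * s) := by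
        simp [Fintype.card_prod, Fintype.card_fun, mul_comm k s]
end
end
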